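/- arXiv:1205.6460 — 4 statements merged into one kernel-verified Lean document; each statement's English description precedes it below -/
import Mathlib

section
/- Let (α,β) be an admissible non-null pair of infinite binary strings. Then there exists a real number x with 1/2 ≤ x < 1 such that Σ_{n≥0} α_n·xⁿ = Σ_{n≥0} β_n·xⁿ. -/
open scoped Classical

/-- Infinite binary strings. -/
abbrev Omega : Type := ℕ → Bool

/-- The shift operator. -/
def shift (ω : Omega) : Omega := fun n => ω (n + 1)

/-- Strict lexicographic order on `Omega`. -/
def lexLt (σ ω : Omega) : Prop :=
  ∃ k : ℕ, (∀ i, i < k → σ i = ω i) ∧ σ k < ω k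

/-- Non-strict lexicographic order on `Omega`. -/
def lexLe (σ ω : Omega) : Prop := lexLt σ ω ∨ σ = ω

/-- An admissible pair of strings. -/
def Admissible (α β : Omega) : Prop :=
  α 0 = false ∧ α 1 = true ∧ β 0 = true ∧ β 1 = false ∧
  (∀ n : ℕ, ¬ (lexLt α (shift^[n] α) ∧ lexLe (shift^[n] α) β)) ∧
  (∀ n : ℕ, ¬ (lexLe α (shift^[n] β) ∧ lexLt (shift^[n] β) β))

/-- The address space `Ω_{(α,β,−)}`. -/
def OmegaMinus (α β : Omega) : Set Omega :=
  {ω | ∀ n : ℕ, ¬ (lexLt α (shift^[n] ω) ∧ lexLe (shift^[n] ω) β)}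

/-- The address space `Ω_{(α,β,+)}`. -/
def OmegaPlus (α β : Omega) : Set Omega :=
  {ω | ∀ n : ℕ, ¬ (lexLe α (shift^[n] ω) ∧ lexLt (shift^[n] ω) β)}

/-- The address space `Ω_{(α,β)}`. -/
def OmegaUnion (α β : Omega) : Set Omega := OmegaMinus α β ∪ OmegaPlus α β

/-- Length-`n` initial segments of the elements of `Γ`. -/
def initSegs (Γ : Set Omega) (n : ℕ) : Set (Fin n → Bool) :=
  (fun ω (i : Fin n) => ω i) '' Γ

/-- Exponential growth rate `h(Γ)`. -/
noncomputable def growth (Γ : Set Omega) : ℝ :=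
  Filter.limsup (fun n : ℕ => Real.log ((initSegs Γ n).ncard) / (n : ℝ)) Filter.atTop

/-- The projection map `π_x`. -/
noncomputable def proj (x : ℝ) (ω : Omega) : ℝ :=
  (1 - x) * ∑' k : ℕ, (if ω k then (1 : ℝ) else 0) * x ^ k

/-- The equation `Σ α_n x^n = Σ β_n x^n`. -/
def seriesEq (α β : Omega) (x : ℝ) : Prop :=
  (∑' n : ℕ, (if α n then (1 : ℝ) else 0) * x ^ n) =
    (∑' n : ℕ, (if β n then (1 : ℝ) else 0) * x ^ n)

/-- Solutions in `[1/2,1)` of `Σ α_n x^n = Σ β_n x^n`. -/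
def baseSet (α β : Omega) : Set ℝ :=
  {x : ℝ | x ∈ Set.Ico (1/2 : ℝ) 1 ∧ seriesEq α β x}

/-- A decimal: a two-sided binary string vanishing far to the left. -/
def IsDecimal (d : ℤ → Bool) : Prop := ∃ m : ℤ, ∀ j, j < m → d j = false

/-- Strict order on decimals. -/
def decLt (d e : ℤ → Bool) : Prop :=
  ∃ j : ℤ, (∀ i, i < j → d i = e i) ∧ d j < e j

/-- The set `Γ^•` of decimals obtained from strings in `Γ`. -/
def dot (Γ : Set Omega) : Set (ℤ → Bool) :=
  {d | ∃ m : ℤ, ∃ γ ∈ Γ, (∀ j, j < m → d j = false) ∧ ∀ i : ℕ, d (m + i) = γ i}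

/-- Prepend a `0` to a string. -/
def cons0 (ω : Omega) : Omega := fun n => match n with | 0 => false | k + 1 => ω k

/-- The space `Ω⁰_{(α,β,−)}`. -/
def Omega0Minus (α β : Omega) : Set Omega :=
  {ω ∈ OmegaMinus α β | lexLe (cons0 ω) α}

/-- The space `Ω⁰_{(α,β,+)}`. -/
def Omega0Plus (α β : Omega) : Set Omega :=
  {ω ∈ OmegaPlus α β | lexLt (cons0 ω) α}

/-- The address space of decimals `Ω^•_{(α,β,−)}`. -/
def dotMinus (α β : Omega) : Set (ℤ → Bool) := dot (Omega0Minus α β)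

/-- The address space of decimals `Ω^•_{(α,β,+)}`. -/
def dotPlus (α β : Omega) : Set (ℤ → Bool) := dot (Omega0Plus α β)

/-- The address space of decimals `Ω^•_{(α,β)}`. -/
def dotUnion (α β : Omega) : Set (ℤ → Bool) :=
  dot (Omega0Minus α β ∪ Omega0Plus α β)

/-- The radix map `d ↦ Σ_{j ∈ ℤ} d(j)·B^(−j)`. -/
noncomputable def radixVal (B : ℝ) (d : ℤ → Bool) : ℝ :=
  ∑' j : ℤ, (if d j then (1 : ℝ) else 0) * B ^ (-j)

/-- Shift invariance for a set of decimals. -/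
def ShiftInvariantDec (Γ : Set (ℤ → Bool)) : Prop :=
  ∀ d ∈ Γ, ∀ k m : ℤ,
    (fun j : ℤ => if m ≤ j then d (j + k) else false) ∈ Γ

noncomputable def val (x : ℝ) (ω : Omega) : ℝ :=
  ∑' n : ℕ, (if ω n then (1 : ℝ) else 0) * x ^ n

lemma term_nonneg {x : ℝ} (hx : 0 ≤ x) (ω : Omega) (n : ℕ) :
    0 ≤ (if ω n then (1 : ℝ) else 0) * x ^ n := by positivity

lemma term_le {x : ℝ} (hx : 0 ≤ x) (ω : Omega) (n : ℕ) :
    (if ω n then (1 : ℝ) else 0) * x ^ n ≤ x ^ n := by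
  have : (if ω n then (1:ℝ) else 0) ≤ 1 := by split <;> norm_num
  nlinarith [pow_nonneg hx n]

lemma summable_val {x : ℝ} (h0 : 0 ≤ x) (h1 : x < 1) (ω : Omega) :
    Summable (fun n => (if ω n then (1 : ℝ) else 0) * x ^ n) := by
  apply Summable.of_nonneg_of_le (term_nonneg h0 ω) (term_le h0 ω)
  exact summable_geometric_of_lt_one h0 h1

lemma val_nonneg {x : ℝ} (h0 : 0 ≤ x) (ω : Omega) : 0 ≤ val x ω :=
  tsum_nonneg (term_nonneg h0 ω)

lemma val_le {x : ℝ} (h0 : 0 ≤ x) (h1 : x < 1) (ω : Omega) : val x ω ≤ (1 - x)⁻¹ := by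
  calc val x ω ≤ ∑' n : ℕ, x ^ n :=
        Summable.tsum_le_tsum (term_le h0 ω) (summable_val h0 h1 ω) (summable_geometric_of_lt_one h0 h1)
    _ = (1 - x)⁻¹ := tsum_geometric_of_lt_one h0 h1

lemma shift_iterate_apply (ω : Omega) (k i : ℕ) : shift^[k] ω i = ω (i + k) := by
  induction k generalizing ω with
  | zero => simp
  | succ m ih =>
    rw [Function.iterate_succ_apply, ih]
    rfl

lemma val_split {x : ℝ} (h0 : 0 ≤ x) (h1 : x < 1) (ω : Omega) (k : ℕ) :
    val x ω = (∑ i ∈ Finset.range k, (if ω i then (1:ℝ) else 0) * x ^ i)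
      + x ^ k * val x (shift^[k] ω) := by
  have hs := summable_val h0 h1 ω
  rw [val, ← hs.sum_add_tsum_nat_add k]
  congr 1
  rw [val, ← tsum_mul_left]
  congr 1
  funext i
  rw [shift_iterate_apply, pow_add]
  ring

lemma pow_sub_pow_abs_le {c x y : ℝ} (hc : 1/2 ≤ c) (hx : x ∈ Set.Icc 0 c)
    (hy : y ∈ Set.Icc 0 c) (n : ℕ) :
    |x ^ n - y ^ n| ≤ 2 * ((n : ℝ) + 1) * c ^ n * |x - y| := by
  have hc0 : (0:ℝ) < c := lt_of_lt_of_le (by norm_num) hc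
  have key : |x ^ n - y ^ n| ≤ (n : ℝ) * c ^ (n - 1) * |x - y| := by
    rw [← geom_sum₂_mul x y n, abs_mul]
    gcongr
    calc |∑ i ∈ Finset.range n, x ^ i * y ^ (n - 1 - i)|
        ≤ ∑ i ∈ Finset.range n, |x ^ i * y ^ (n - 1 - i)| := Finset.abs_sum_le_sum_abs _ _
      _ ≤ ∑ _i ∈ Finset.range n, c ^ (n - 1) := by
          apply Finset.sum_le_sum
          intro i hi
          rw [Finset.mem_range] at hi
          rw [abs_mul, abs_pow, abs_pow, abs_of_nonneg hx.1, abs_of_nonneg hy.1]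
          calc x ^ i * y ^ (n-1-i)
              ≤ c ^ i * c ^ (n-1-i) :=
                mul_le_mul (pow_le_pow_left₀ hx.1 hx.2 i) (pow_le_pow_left₀ hy.1 hy.2 _)
                  (pow_nonneg hy.1 _) (pow_nonneg hc0.le _)
            _ = c ^ (n - 1) := by rw [← pow_add]; congr 1; omega
      _ = (n : ℝ) * c ^ (n - 1) := by rw [Finset.sum_const, Finset.card_range]; ring
  refine key.trans ?_
  have h1 : c ^ (n - 1) ≤ 2 * c ^ n := by
    cases n with
    | zero => norm_num
    | succ m =>
      simp only [Nat.add_sub_cancel]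
      calc c ^ m = 1 * c ^ m := (one_mul _).symm
        _ ≤ (2 * c) * c ^ m := by
            apply mul_le_mul_of_nonneg_right (by linarith) (pow_nonneg hc0.le m)
        _ = 2 * c ^ (m + 1) := by ring
  have : (n:ℝ) * c ^ (n-1) ≤ 2 * ((n:ℝ)+1) * c ^ n := by
    calc (n:ℝ) * c ^ (n-1) ≤ (n:ℝ) * (2 * c ^ n) :=
          mul_le_mul_of_nonneg_left h1 (Nat.cast_nonneg n)
      _ ≤ 2 * ((n:ℝ)+1) * c ^ n := by nlinarith [pow_nonneg hc0.le n, Nat.cast_nonneg (α := ℝ) n]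
  apply mul_le_mul_of_nonneg_right this (abs_nonneg _)

noncomputable def Lip (c : ℝ) : ℝ := 2 * ∑' n : ℕ, ((n : ℝ) + 1) * c ^ n

lemma summable_np1 {c : ℝ} (h0 : 0 ≤ c) (h1 : c < 1) :
    Summable (fun n : ℕ => ((n:ℝ)+1) * c ^ n) := by
  have h1' : ‖c‖ < 1 := by rw [Real.norm_eq_abs, abs_of_nonneg h0]; exact h1
  have h := summable_pow_mul_geometric_of_norm_lt_one 1 h1'
  have h' : Summable (fun n : ℕ => (n:ℝ) * c ^ n) := by simpa using h
  have h2 := summable_geometric_of_lt_one h0 h1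
  simpa [add_mul] using h'.add h2

lemma Lip_nonneg {c : ℝ} (h0 : 0 ≤ c) : 0 ≤ Lip c := by
  unfold Lip
  have : 0 ≤ ∑' n : ℕ, ((n:ℝ)+1) * c ^ n :=
    tsum_nonneg fun n => by positivity
  linarith

lemma val_lip {c x y : ℝ} (hc : 1/2 ≤ c) (hc1 : c < 1) (hx : x ∈ Set.Icc 0 c)
    (hy : y ∈ Set.Icc 0 c) (ω : Omega) :
    |val x ω - val y ω| ≤ Lip c * |x - y| := by
  have hc0 : (0:ℝ) ≤ c := le_trans (by norm_num) hc
  have hx1 : x < 1 := lt_of_le_of_lt hx.2 hc1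
  have hy1 : y < 1 := lt_of_le_of_lt hy.2 hc1
  have hsx := summable_val hx.1 hx1 ω
  have hsy := summable_val hy.1 hy1 ω
  have hdiff : val x ω - val y ω
      = ∑' n : ℕ, (if ω n then (1:ℝ) else 0) * (x ^ n - y ^ n) := by
    rw [val, val, ← hsx.tsum_sub hsy]
    congr 1; funext n; ring
  rw [hdiff]
  have hbound : ∀ n : ℕ, |(if ω n then (1:ℝ) else 0) * (x ^ n - y ^ n)|
      ≤ 2 * ((n:ℝ)+1) * c ^ n * |x - y| := by
    intro n
    rw [abs_mul]
    have h1 : |(if ω n then (1:ℝ) else 0)| ≤ 1 := by split <;> norm_num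
    have h2 := pow_sub_pow_abs_le hc hx hy n
    calc |(if ω n then (1:ℝ) else 0)| * |x ^ n - y ^ n| ≤ 1 * |x ^ n - y ^ n| := by
          apply mul_le_mul_of_nonneg_right h1 (abs_nonneg _)
      _ = |x ^ n - y ^ n| := one_mul _
      _ ≤ 2 * ((n:ℝ)+1) * c ^ n * |x - y| := h2
  have hgsum : Summable (fun n : ℕ => 2 * ((n:ℝ)+1) * c ^ n * |x - y|) := by
    have := (summable_np1 hc0 hc1).mul_left 2
    simpa [mul_assoc, mul_comm, mul_left_comm] using this.mul_right |x - y|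
  have hf : Summable (fun n : ℕ => (if ω n then (1:ℝ) else 0) * (x ^ n - y ^ n)) := by
    have := hsx.sub hsy
    apply Summable.congr this
    intro n; ring
  have habs : Summable (fun n : ℕ => ‖(if ω n then (1:ℝ) else 0) * (x ^ n - y ^ n)‖) := by
    simpa [Real.norm_eq_abs] using hf.abs
  have hstep : ‖∑' n : ℕ, (if ω n then (1:ℝ) else 0) * (x ^ n - y ^ n)‖
      ≤ ∑' n : ℕ, ‖(if ω n then (1:ℝ) else 0) * (x ^ n - y ^ n)‖ :=
    norm_tsum_le_tsum_norm habs
  rw [Real.norm_eq_abs] at hstep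
  simp only [Real.norm_eq_abs] at hstep
  calc |∑' n : ℕ, (if ω n then (1:ℝ) else 0) * (x ^ n - y ^ n)|
      ≤ ∑' n : ℕ, |(if ω n then (1:ℝ) else 0) * (x ^ n - y ^ n)| := hstep
    _ ≤ ∑' n : ℕ, 2 * ((n:ℝ)+1) * c ^ n * |x - y| := by
        apply Summable.tsum_le_tsum hbound _ hgsum
        exact hf.abs
    _ = Lip c * |x - y| := by
        rw [Lip, mul_assoc, ← tsum_mul_right, ← tsum_mul_left]
        congr 1; funext n; ring


lemma lexLt_elim {σ ω : Omega} (h : lexLt σ ω) :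
    ∃ k : ℕ, (∀ i, i < k → σ i = ω i) ∧ σ k = false ∧ ω k = true := by
  obtain ⟨k, hag, hlt⟩ := h
  exact ⟨k, hag, Bool.lt_iff.mp hlt⟩

lemma lex_total (σ ω : Omega) : σ = ω ∨ lexLt σ ω ∨ lexLt ω σ := by
  by_cases h : σ = ω
  · exact Or.inl h
  · right
    have hne : ∃ k, σ k ≠ ω k := by
      by_contra hc
      push_neg at hc
      exact h (funext hc)
    classical
    let k := Nat.find hne
    have hk : σ k ≠ ω k := Nat.find_spec hne
    have hag : ∀ i, i < k → σ i = ω i := fun i hi => by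
      by_contra hne2
      exact Nat.find_min hne hi hne2
    cases hsk : σ k <;> cases hwk : ω k
    · rw [hsk, hwk] at hk; exact absurd rfl hk
    · exact Or.inl ⟨k, hag, by rw [hsk, hwk]; exact Bool.lt_iff.mpr ⟨rfl, rfl⟩⟩
    · exact Or.inr ⟨k, fun i hi => (hag i hi).symm, by rw [hsk, hwk]; exact Bool.lt_iff.mpr ⟨rfl, rfl⟩⟩
    · rw [hsk, hwk] at hk; exact absurd rfl hk


lemma not_lexLt_iff {σ ω : Omega} : ¬ lexLt σ ω ↔ lexLe ω σ := by
  constructor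
  · intro h
    rcases lex_total σ ω with he | hlt | hgt
    · exact Or.inr he.symm
    · exact absurd hlt h
    · exact Or.inl hgt
  · rintro (hlt | he) hcon
    · obtain ⟨k, hag, hk0, hk1⟩ := lexLt_elim hcon
      obtain ⟨m, mag, hm0, hm1⟩ := lexLt_elim hlt
      rcases lt_trichotomy k m with h1 | h1 | h1
      · rw [mag k h1] at hk1; rw [hk1] at hk0; exact Bool.noConfusion hk0
      · subst h1; rw [hk0] at hm1; exact Bool.noConfusion hm1
      · have h2 := hag m h1
        rw [hm0] at h2
        rw [h2] at hm1
        exact Bool.noConfusion hm1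
    · subst he
      obtain ⟨k, hag, hk0, hk1⟩ := lexLt_elim hcon
      rw [hk0] at hk1; exact Bool.noConfusion hk1

lemma le_val_head_true {x : ℝ} (h0 : 0 ≤ x) (h1 : x < 1) {ω : Omega}
    (hω : ω 0 = true) : 1 ≤ val x ω := by
  rw [val]
  refine le_trans ?_ (Summable.le_tsum (summable_val h0 h1 ω) 0 (fun j _ => term_nonneg h0 ω j))
  simp [hω]

lemma val_head_false_le {x : ℝ} (h0 : 0 ≤ x) (h1 : x < 1) {ω : Omega}
    (hω : ω 0 = false) : val x ω ≤ x * (1 - x)⁻¹ := by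
  have hsplit := val_split h0 h1 ω 1
  rw [Function.iterate_one] at hsplit
  rw [hsplit]
  simp [hω]
  have := val_le h0 h1 (shift ω)
  calc x * val x (shift ω) ≤ x * (1-x)⁻¹ := by
        apply mul_le_mul_of_nonneg_left this h0

lemma val_diff_split {x : ℝ} (h0 : 0 ≤ x) (h1 : x < 1) {σ ω : Omega} (k : ℕ)
    (hag : ∀ i, i < k → σ i = ω i) :
    val x ω - val x σ = x ^ k * (val x (shift^[k] ω) - val x (shift^[k] σ)) := by
  rw [val_split h0 h1 ω k, val_split h0 h1 σ k]
  have : (∑ i ∈ Finset.range k, (if σ i then (1:ℝ) else 0) * x ^ i)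
      = ∑ i ∈ Finset.range k, (if ω i then (1:ℝ) else 0) * x ^ i := by
    apply Finset.sum_congr rfl
    intro i hi
    rw [hag i (Finset.mem_range.mp hi)]
  rw [this]; ring

lemma val_mono_half {σ ω : Omega} (h : lexLe σ ω) : val (1/2) σ ≤ val (1/2) ω := by
  rcases h with hlt | he
  · obtain ⟨k, hag, hk0, hk1⟩ := lexLt_elim hlt
    have h0 : (0:ℝ) ≤ 1/2 := by norm_num
    have h1 : (1:ℝ)/2 < 1 := by norm_num
    have hd := val_diff_split h0 h1 k hag
    have hσk : shift^[k] σ 0 = false := by rw [shift_iterate_apply]; simpa using hk0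
    have hωk : shift^[k] ω 0 = true := by rw [shift_iterate_apply]; simpa using hk1
    have hvω : 1 ≤ val (1/2) (shift^[k] ω) := le_val_head_true h0 h1 hωk
    have hvσ : val (1/2) (shift^[k] σ) ≤ 1 := by
      have := val_head_false_le h0 h1 hσk
      norm_num at this
      exact this
    nlinarith [pow_pos (by norm_num : (0:ℝ) < 1/2) k]
  · rw [he]


section Struct

variable {α β : Omega}

lemma alpha_mem (hadm : Admissible α β) : α ∈ OmegaUnion α β :=
  Or.inl (fun n => hadm.2.2.2.2.1 n)

lemma beta_mem (hadm : Admissible α β) : β ∈ OmegaUnion α β :=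
  Or.inr (fun n => hadm.2.2.2.2.2 n)

lemma shift_mem (ω : Omega) (hω : ω ∈ OmegaUnion α β) (k : ℕ) :
    shift^[k] ω ∈ OmegaUnion α β := by
  rcases hω with h | h
  · exact Or.inl (fun n => by rw [← Function.iterate_add_apply]; exact h (n + k))
  · exact Or.inr (fun n => by rw [← Function.iterate_add_apply]; exact h (n + k))

lemma lexLt_alpha_beta (hadm : Admissible α β) : lexLt α β :=
  ⟨0, fun i hi => absurd hi (Nat.not_lt_zero i),
    by rw [hadm.1, hadm.2.2.1]; exact Bool.lt_iff.mpr ⟨rfl, rfl⟩⟩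

lemma head_false_le_alpha (hadm : Admissible α β) {ω : Omega}
    (hω : ω ∈ OmegaUnion α β) (h0 : ω 0 = false) : lexLe ω α := by
  have hωβ : lexLt ω β :=
    ⟨0, fun i hi => absurd hi (Nat.not_lt_zero i),
      by rw [h0, hadm.2.2.1]; exact Bool.lt_iff.mpr ⟨rfl, rfl⟩⟩
  rcases hω with h | h
  · have := h 0
    simp only [Function.iterate_zero, id] at this
    refine not_lexLt_iff.mp (fun hc => ?_)
    exact this ⟨hc, Or.inl hωβ⟩
  · have := h 0
    simp only [Function.iterate_zero, id] at this
    refine not_lexLt_iff.mp (fun hc => ?_)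
    exact this ⟨Or.inl hc, hωβ⟩

lemma head_true_ge_beta (hadm : Admissible α β) {ω : Omega}
    (hω : ω ∈ OmegaUnion α β) (h0 : ω 0 = true) : lexLe β ω := by
  have hαω : lexLt α ω :=
    ⟨0, fun i hi => absurd hi (Nat.not_lt_zero i),
      by rw [h0, hadm.1]; exact Bool.lt_iff.mpr ⟨rfl, rfl⟩⟩
  rcases hω with h | h
  · have := h 0
    simp only [Function.iterate_zero, id] at this
    by_cases hc : lexLt ω β
    · exact absurd ⟨hαω, Or.inl hc⟩ this
    · exact not_lexLt_iff.mp hc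
  · have := h 0
    simp only [Function.iterate_zero, id] at this
    by_cases hc : lexLt ω β
    · exact absurd ⟨Or.inl hαω, hc⟩ this
    · exact not_lexLt_iff.mp hc

end Struct

def AS (α β : Omega) : Set Omega := {u | u ∈ OmegaUnion α β ∧ lexLe u α}
def BS (α β : Omega) : Set Omega := {v | v ∈ OmegaUnion α β ∧ lexLe β v}
noncomputable def Fgap (α β : Omega) (x : ℝ) : ℝ := val x β - val x α
def Pprop (α β : Omega) (y : ℝ) : Prop :=
  ∀ u ∈ AS α β, ∀ v ∈ BS α β, 0 ≤ val y v - val y u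

section Boot

variable {α β : Omega}

lemma tail_AS (hadm : Admissible α β) {σ : Omega} (hσ : σ ∈ OmegaUnion α β)
    {k : ℕ} (hk : σ k = false) : shift^[k] σ ∈ AS α β := by
  have hmem := shift_mem σ hσ k
  refine ⟨hmem, head_false_le_alpha hadm hmem ?_⟩
  rw [shift_iterate_apply]
  simpa using hk

lemma tail_BS (hadm : Admissible α β) {σ : Omega} (hσ : σ ∈ OmegaUnion α β)
    {k : ℕ} (hk : σ k = true) : shift^[k] σ ∈ BS α β := by
  have hmem := shift_mem σ hσ k
  refine ⟨hmem, head_true_ge_beta hadm hmem ?_⟩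
  rw [shift_iterate_apply]
  simpa using hk

lemma mono_of_P {y : ℝ} (h0 : 0 ≤ y) (h1 : y < 1) (hadm : Admissible α β)
    (hP : Pprop α β y) {σ ω : Omega} (hσ : σ ∈ OmegaUnion α β)
    (hω : ω ∈ OmegaUnion α β) (hle : lexLe σ ω) : val y σ ≤ val y ω := by
  rcases hle with hlt | he
  · obtain ⟨k, hag, hk0, hk1⟩ := lexLt_elim hlt
    have hd := val_diff_split h0 h1 k hag
    have hA := tail_AS hadm hσ hk0
    have hB := tail_BS hadm hω hk1
    have := hP _ hA _ hB
    nlinarith [pow_nonneg h0 k]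
  · rw [he]

lemma Q_of_P {y : ℝ} (h0 : 0 ≤ y) (h1 : y < 1) (hadm : Admissible α β)
    (hP : Pprop α β y) : ∀ u ∈ AS α β, ∀ v ∈ BS α β,
      Fgap α β y ≤ val y v - val y u := by
  intro u hu v hv
  have h1' := mono_of_P h0 h1 hadm hP hu.1 (alpha_mem hadm) hu.2
  have h2' := mono_of_P h0 h1 hadm hP (beta_mem hadm) hv.1 hv.2
  rw [Fgap]
  linarith

lemma P_half (hadm : Admissible α β) : Pprop α β (1/2) := by
  intro u hu v hv
  have h1 := val_mono_half hu.2
  have h2 := val_mono_half (Or.inl (lexLt_alpha_beta hadm) : lexLe α β)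
  have h3 := val_mono_half hv.2
  linarith

lemma bootstrap (hadm : Admissible α β)
    (hF : ∀ y : ℝ, 1/2 ≤ y → y < 1 → 0 < Fgap α β y) :
    ∀ y : ℝ, 1/2 ≤ y → y < 1 → Pprop α β y := by
  by_contra hcon
  push_neg at hcon
  obtain ⟨y₁, hy₁l, hy₁r, hy₁P⟩ := hcon
  set Bset : Set ℝ := {y | (1/2 ≤ y ∧ y < 1) ∧ ¬ Pprop α β y} with hBdef
  have hne : Bset.Nonempty := ⟨y₁, ⟨hy₁l, hy₁r⟩, hy₁P⟩
  have hbdd : BddBelow Bset := ⟨1/2, fun b hb => hb.1.1⟩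
  set y₀ := sInf Bset with hy₀def
  have hy₀l : 1/2 ≤ y₀ := le_csInf hne (fun b hb => hb.1.1)
  have hy₀u : y₀ ≤ y₁ := csInf_le hbdd ⟨⟨hy₁l, hy₁r⟩, hy₁P⟩
  have hy₀r : y₀ < 1 := lt_of_le_of_lt hy₀u hy₁r
  set c : ℝ := (y₁ + 1) / 2 with hcdef
  have hc1 : c < 1 := by rw [hcdef]; linarith
  have hchalf : 1/2 ≤ c := by rw [hcdef]; linarith
  have hcy₁ : y₁ ≤ c := by rw [hcdef]; linarith
  have hcy₀ : y₀ < c := lt_of_le_of_lt hy₀u (by rw [hcdef]; linarith)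
  set L := Lip c with hLdef
  have hL0 : 0 ≤ L := Lip_nonneg (by linarith)
  -- Step A : P y₀
  have hPy₀ : Pprop α β y₀ := by
    intro u hu v hv
    by_contra hneg
    push_neg at hneg
    -- gap < 0 ; find y < y₀ with P y and close
    set ε := (val y₀ u - val y₀ v) with hεdef
    have hε : 0 < ε := by rw [hεdef]; linarith
    have key : ∀ y : ℝ, 1/2 ≤ y → y ≤ y₀ → Pprop α β y →
        0 ≤ val y₀ v - val y₀ u + 2 * L * (y₀ - y) := by
      intro y hyl hyu hPy
      have hyIcc : y ∈ Set.Icc (0:ℝ) c := ⟨by linarith, by linarith⟩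
      have hy₀Icc : y₀ ∈ Set.Icc (0:ℝ) c := ⟨by linarith, by linarith⟩
      have lu := val_lip hchalf hc1 hy₀Icc hyIcc u
      have lv := val_lip hchalf hc1 hy₀Icc hyIcc v
      have hgap := hPy u hu v hv
      rw [abs_sub_le_iff] at lu lv
      have habs : |y₀ - y| = y₀ - y := abs_of_nonneg (by linarith)
      rw [habs] at lu lv
      linarith [lu.1, lu.2, lv.1, lv.2]
    rcases eq_or_lt_of_le hy₀l with heq | hlt
    · have hk := key (1/2) le_rfl (le_of_eq heq) (P_half hadm)
      have hz : y₀ - 1/2 = 0 := by linarith [heq.le, heq.ge]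
      have hz2 : 2 * L * (y₀ - 1/2) = 0 := by rw [hz]; ring
      linarith
    · set d := min (y₀ - 1/2) (ε / (2 * L + 1) / 2) with hddef
      have hd0 : 0 < d := by
        apply lt_min (by linarith)
        positivity
      set y := y₀ - d with hydef
      have hyl : 1/2 ≤ y := by
        have : d ≤ y₀ - 1/2 := min_le_left _ _
        rw [hydef]; linarith
      have hyu : y < y₀ := by rw [hydef]; linarith
      have hynotB : y ∉ Bset := fun hmem => absurd (csInf_le hbdd hmem) (not_le.mpr hyu)
      have hPy : Pprop α β y := by
        by_contra hc
        exact hynotB ⟨⟨hyl, by linarith⟩, hc⟩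
      have hk := key y hyl (le_of_lt hyu) hPy
      have hd2 : d ≤ ε / (2 * L + 1) / 2 := min_le_right _ _
      have hk2 : (0:ℝ) ≤ -ε + 2 * L * d := by
        have : y₀ - y = d := by rw [hydef]; ring
        rw [this] at hk; linarith
      have hpos : (0:ℝ) < 2 * L + 1 := by linarith
      have h4 : 2 * L * d ≤ 2 * L * (ε / (2 * L + 1) / 2) :=
        mul_le_mul_of_nonneg_left hd2 (by linarith)
      have h5 : 2 * L * (ε / (2 * L + 1) / 2) = L * ε / (2 * L + 1) := by ring
      have h6 : L * ε / (2 * L + 1) ≤ ε / 2 := by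
        rw [div_le_iff₀ hpos]; nlinarith
      linarith
  -- Step B : contradiction via neighborhood of y₀
  have hQy₀ := Q_of_P (by linarith) hy₀r hadm hPy₀
  set μ := Fgap α β y₀ with hμdef
  have hμ0 : 0 < μ := hF y₀ hy₀l hy₀r
  set δ := min (c - y₀) (μ / (2 * L + 1) / 2) with hδdef
  have hδ0 : 0 < δ := by
    apply lt_min (by linarith)
    positivity
  have hstep : ∀ y : ℝ, y₀ ≤ y → y ≤ y₀ + δ → y < 1 → Pprop α β y := by
    intro y hyl hyu hy1
    intro u hu v hv
    have hyIcc : y ∈ Set.Icc (0:ℝ) c := by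
      constructor
      · linarith
      · have : δ ≤ c - y₀ := min_le_left _ _
        linarith
    have hy₀Icc : y₀ ∈ Set.Icc (0:ℝ) c := ⟨by linarith, by linarith⟩
    have lu := val_lip hchalf hc1 hyIcc hy₀Icc u
    have lv := val_lip hchalf hc1 hyIcc hy₀Icc v
    have hgap := hQy₀ u hu v hv
    rw [abs_sub_le_iff] at lu lv
    have habs : |y - y₀| = y - y₀ := abs_of_nonneg (by linarith)
    rw [habs] at lu lv
    have hδ2 : δ ≤ μ / (2 * L + 1) / 2 := min_le_right _ _
    have hyd : y - y₀ ≤ δ := by linarith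
    have h2Ld : 2 * L * (y - y₀) ≤ 2 * L * δ := by
      apply mul_le_mul_of_nonneg_left hyd (by linarith)
    have hpos : (0:ℝ) < 2 * L + 1 := by linarith
    have h4 : 2 * L * δ ≤ 2 * L * (μ / (2 * L + 1) / 2) :=
      mul_le_mul_of_nonneg_left hδ2 (by linarith)
    have h5 : 2 * L * (μ / (2 * L + 1) / 2) = L * μ / (2 * L + 1) := by ring
    have h6 : L * μ / (2 * L + 1) ≤ μ / 2 := by
      rw [div_le_iff₀ hpos]; nlinarith
    linarith [lu.1, lu.2, lv.1, lv.2]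
  have hfinal : ∀ b ∈ Bset, y₀ + δ ≤ b := by
    intro b hb
    by_contra hc
    push_neg at hc
    have hb₀ : y₀ ≤ b := csInf_le hbdd hb
    exact hb.2 (hstep b hb₀ (le_of_lt hc) hb.1.2)
  have : y₀ + δ ≤ y₀ := le_csInf hne hfinal
  linarith

end Boot


section Count

variable {α β : Omega}

lemma separation (hadm : Admissible α β)
    (hF : ∀ y : ℝ, 1/2 ≤ y → y < 1 → 0 < Fgap α β y)
    {y : ℝ} (hyl : 1/2 ≤ y) (hyr : y < 1) {σ ω : Omega}
    (hσ : σ ∈ OmegaUnion α β) (hω : ω ∈ OmegaUnion α β)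
    {n : ℕ} (hdiff : ∃ i, i < n ∧ σ i ≠ ω i) :
    y ^ n * Fgap α β y ≤ |val y ω - val y σ| := by
  have h0 : (0:ℝ) ≤ y := by linarith
  have hP := bootstrap hadm hF y hyl hyr
  have hQ := Q_of_P h0 hyr hadm hP
  obtain ⟨i, hin, hine⟩ := hdiff
  have key : ∀ σ' ω' : Omega, σ' ∈ OmegaUnion α β → ω' ∈ OmegaUnion α β →
      lexLt σ' ω' → (∃ i, i < n ∧ σ' i ≠ ω' i) →
      y ^ n * Fgap α β y ≤ val y ω' - val y σ' := by
    intro σ' ω' hσ' hω' hlt ⟨j, hjn, hjne⟩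
    obtain ⟨k, hag, hk0, hk1⟩ := lexLt_elim hlt
    have hkn : k < n := by
      by_contra hc
      push_neg at hc
      exact hjne (hag j (lt_of_lt_of_le hjn hc))
    have hd := val_diff_split h0 hyr k hag
    have hA := tail_AS hadm hσ' hk0
    have hB := tail_BS hadm hω' hk1
    have hgap := hQ _ hA _ hB
    have hpowle : y ^ n ≤ y ^ k := pow_le_pow_of_le_one h0 (le_of_lt hyr) (le_of_lt hkn)
    have hμ := hF y hyl hyr
    calc y ^ n * Fgap α β y ≤ y ^ k * Fgap α β y := by
          apply mul_le_mul_of_nonneg_right hpowle (le_of_lt hμ)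
      _ ≤ y ^ k * (val y (shift^[k] ω') - val y (shift^[k] σ')) := by
          apply mul_le_mul_of_nonneg_left hgap (pow_nonneg h0 k)
      _ = val y ω' - val y σ' := hd.symm
  rcases lex_total σ ω with he | hlt | hgt
  · exact absurd (congrFun he i) hine
  · have := key σ ω hσ hω hlt ⟨i, hin, hine⟩
    rw [abs_of_nonneg (by linarith [this, mul_pos (pow_pos (by linarith : (0:ℝ) < y) n) (hF y hyl hyr)])]
    exact this
  · have := key ω σ hω hσ hgt ⟨i, hin, fun h => hine h.symm⟩
    rw [abs_sub_comm, abs_of_nonneg (by linarith [this, mul_pos (pow_pos (by linarith : (0:ℝ) < y) n) (hF y hyl hyr)])]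
    exact this

lemma card_bound (hadm : Admissible α β)
    (hF : ∀ y : ℝ, 1/2 ≤ y → y < 1 → 0 < Fgap α β y)
    {y : ℝ} (hyl : 1/2 ≤ y) (hyr : y < 1) (n : ℕ) :
    ((initSegs (OmegaUnion α β) n).ncard : ℝ)
      ≤ (1 - y)⁻¹ / (y ^ n * Fgap α β y) + 1 := by
  classical
  have h0 : (0:ℝ) ≤ y := by linarith
  set Γ := OmegaUnion α β with hΓ
  set s := initSegs Γ n with hs
  set μ := Fgap α β y with hμ
  have hμ0 : 0 < μ := hF y hyl hyr
  set δ := y ^ n * μ with hδ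
  have hδ0 : 0 < δ := mul_pos (pow_pos (by linarith) n) hμ0
  set M := (1 - y)⁻¹ with hM
  have hM0 : 0 < M := by rw [hM]; exact inv_pos.mpr (by linarith)
  set N := ⌊M / δ⌋₊ + 1 with hN
  -- the chooser
  have hchoose : ∀ p ∈ s, ∃ ω : Omega, ω ∈ Γ ∧ (fun i : Fin n => ω i) = p := by
    intro p hp
    obtain ⟨ω, hω, hωp⟩ := hp
    exact ⟨ω, hω, hωp⟩
  choose pick hpickΓ hpickeq using hchoose
  set g : (Fin n → Bool) → ℕ := fun p => if h : p ∈ s then ⌊val y (pick p h) / δ⌋₊ else 0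
    with hg
  have hmaps : ∀ p ∈ s, g p ∈ ((Finset.range N : Finset ℕ) : Set ℕ) := by
    intro p hp
    rw [Finset.mem_coe, Finset.mem_range, hg]
    simp only [dif_pos hp]
    rw [hN]
    have hval : val y (pick p hp) ≤ M := val_le h0 hyr _
    have : ⌊val y (pick p hp) / δ⌋₊ ≤ ⌊M / δ⌋₊ := by
      apply Nat.floor_le_floor
      exact (div_le_div_iff_of_pos_right hδ0).mpr hval
    omega
  have hinj : Set.InjOn g s := by
    intro p hp q hq hpq
    by_contra hne
    have hip : ∃ i : Fin n, p i ≠ q i := by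
      by_contra hc
      push_neg at hc
      exact hne (funext hc)
    obtain ⟨i, hi⟩ := hip
    have hdiffi : ∃ j, j < n ∧ (pick p hp) j ≠ (pick q hq) j := by
      refine ⟨i, i.2, ?_⟩
      intro hcc
      apply hi
      rw [← hpickeq p hp, ← hpickeq q hq]
      simp only []
      exact hcc
    have hsep := separation hadm hF hyl hyr (hpickΓ p hp) (hpickΓ q hq) hdiffi
    rw [hg] at hpq
    simp only [dif_pos hp, dif_pos hq] at hpq
    set a := val y (pick q hq) with ha
    set b := val y (pick p hp) with hb
    have ha0 : 0 ≤ a := val_nonneg h0 _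
    have hb0 : 0 ≤ b := val_nonneg h0 _
    have h1 : (⌊b / δ⌋₊ : ℝ) ≤ b / δ := Nat.floor_le (by positivity)
    have h2 : b / δ < ⌊b / δ⌋₊ + 1 := Nat.lt_floor_add_one _
    have h3 : (⌊a / δ⌋₊ : ℝ) ≤ a / δ := Nat.floor_le (by positivity)
    have h4 : a / δ < ⌊a / δ⌋₊ + 1 := Nat.lt_floor_add_one _
    have heqf : (⌊b / δ⌋₊ : ℝ) = (⌊a / δ⌋₊ : ℝ) := by exact_mod_cast congrArg Nat.cast hpq
    have e1 : (a - b) / δ < 1 := by rw [sub_div]; linarith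
    have e2 : (b - a) / δ < 1 := by rw [sub_div]; linarith
    have f1 : a - b < δ := by rwa [div_lt_one hδ0] at e1
    have f2 : b - a < δ := by rwa [div_lt_one hδ0] at e2
    have habs : |a - b| < δ := by rw [abs_lt]; exact ⟨by linarith, f1⟩
    rw [← hμ, ← hδ] at hsep
    linarith
  have hcard : s.ncard ≤ N := by
    have := Set.ncard_le_ncard_of_injOn g hmaps hinj (Set.toFinite _)
    rwa [Set.ncard_coe_finset, Finset.card_range] at this
  calc (s.ncard : ℝ) ≤ (N : ℝ) := by exact_mod_cast hcard
    _ = (⌊M / δ⌋₊ : ℝ) + 1 := by rw [hN]; push_cast; ring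
    _ ≤ M / δ + 1 := by
        have := Nat.floor_le (show (0:ℝ) ≤ M / δ by positivity)
        linarith

end Count

section Growth

variable {α β : Omega}

lemma aseq_nonneg (hadm : Admissible α β) (n : ℕ) :
    0 ≤ Real.log ((initSegs (OmegaUnion α β) n).ncard) / (n : ℝ) := by
  apply div_nonneg _ (Nat.cast_nonneg n)
  apply Real.log_natCast_nonneg

lemma ncard_pos (hadm : Admissible α β) (n : ℕ) :
    0 < (initSegs (OmegaUnion α β) n).ncard := by
  rw [Set.ncard_pos (Set.toFinite _)]
  exact ⟨_, α, alpha_mem hadm, rfl⟩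

lemma growth_le (hadm : Admissible α β)
    (hF : ∀ y : ℝ, 1/2 ≤ y → y < 1 → 0 < Fgap α β y)
    {y : ℝ} (hyl : 1/2 ≤ y) (hyr : y < 1) :
    growth (OmegaUnion α β) ≤ Real.log y⁻¹ := by
  have hy0 : (0:ℝ) < y := by linarith
  set μ := Fgap α β y with hμ
  have hμ0 : 0 < μ := hF y hyl hyr
  set M := (1 - y)⁻¹ with hM
  have hM0 : 0 < M := inv_pos.mpr (by linarith)
  set C := M / μ + 1 with hC
  have hC1 : 1 ≤ C := by
    rw [hC]
    have : 0 ≤ M / μ := by positivity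
    linarith
  have hinv1 : (1:ℝ) ≤ y⁻¹ := by
    rw [le_inv_comm₀] <;> linarith
  have hlogy : 0 ≤ Real.log y⁻¹ := Real.log_nonneg hinv1
  have hbound : ∀ n : ℕ, 1 ≤ n →
      Real.log ((initSegs (OmegaUnion α β) n).ncard) / (n : ℝ)
        ≤ Real.log C / n + Real.log y⁻¹ := by
    intro n hn
    have hn0 : (0:ℝ) < n := by exact_mod_cast hn
    have hcard := card_bound hadm hF hyl hyr n
    rw [← hμ, ← hM] at hcard
    have hCyn : M / (y ^ n * μ) + 1 ≤ C * (y⁻¹) ^ n := by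
      have hyn : (0:ℝ) < y ^ n := pow_pos hy0 n
      have hinv : (1:ℝ) ≤ (y⁻¹) ^ n := one_le_pow₀ hinv1
      have e1 : M / (y ^ n * μ) = (M / μ) * (y⁻¹) ^ n := by
        rw [inv_pow]
        field_simp
      rw [e1, hC]
      nlinarith [div_nonneg hM0.le hμ0.le]
    have hlog : Real.log ((initSegs (OmegaUnion α β) n).ncard)
        ≤ Real.log C + n * Real.log y⁻¹ := by
      have hpos : (0:ℝ) < ((initSegs (OmegaUnion α β) n).ncard : ℝ) := by
        exact_mod_cast ncard_pos hadm n
      calc Real.log ((initSegs (OmegaUnion α β) n).ncard)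
          ≤ Real.log (C * (y⁻¹) ^ n) :=
            Real.log_le_log hpos (le_trans hcard hCyn)
        _ = Real.log C + n * Real.log y⁻¹ := by
            rw [Real.log_mul (by linarith) (by positivity), Real.log_pow]
    calc Real.log ((initSegs (OmegaUnion α β) n).ncard) / (n : ℝ)
        ≤ (Real.log C + n * Real.log y⁻¹) / n := by
          apply div_le_div_of_nonneg_right hlog hn0.le
      _ = Real.log C / n + Real.log y⁻¹ := by
          rw [add_div, mul_comm (n:ℝ) (Real.log y⁻¹), mul_div_assoc,
            div_self (ne_of_gt hn0), mul_one]
  have hcob : Filter.IsCoboundedUnder (· ≤ ·) Filter.atTop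
      (fun n : ℕ => Real.log ((initSegs (OmegaUnion α β) n).ncard) / (n : ℝ)) :=
    Filter.isCoboundedUnder_le_of_le Filter.atTop (fun n => aseq_nonneg hadm n)
  have key : ∀ ε : ℝ, 0 < ε →
      growth (OmegaUnion α β) ≤ Real.log y⁻¹ + ε := by
    intro ε hε
    apply Filter.limsup_le_of_le hcob
    have htend : Filter.Tendsto (fun n : ℕ => Real.log C / (n : ℝ)) Filter.atTop (nhds 0) :=
      tendsto_const_div_atTop_nhds_zero_nat _
    have hev : ∀ᶠ n : ℕ in Filter.atTop, Real.log C / (n : ℝ) < ε :=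
      htend.eventually_lt_const hε
    filter_upwards [hev, Filter.eventually_ge_atTop 1] with n h1 h2
    have := hbound n h2
    linarith
  have hfin : ∀ ε : ℝ, 0 < ε → growth (OmegaUnion α β) ≤ Real.log y⁻¹ + ε := key
  exact le_of_forall_pos_le_add hfin

end Growth

section Final

variable {α β : Omega}

lemma aseq_le_log2 (n : ℕ) :
    Real.log ((initSegs (OmegaUnion α β) n).ncard) / (n : ℝ) ≤ Real.log 2 := by
  rcases Nat.eq_zero_or_pos n with h | h
  · subst h
    simp
    exact Real.log_nonneg (by norm_num)
  · have hn0 : (0:ℝ) < n := by exact_mod_cast h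
    have hcard : (initSegs (OmegaUnion α β) n).ncard ≤ 2 ^ n := by
      calc (initSegs (OmegaUnion α β) n).ncard
          ≤ (Set.univ : Set (Fin n → Bool)).ncard :=
            Set.ncard_le_ncard (Set.subset_univ _) Set.finite_univ
        _ = 2 ^ n := by
            rw [Set.ncard_univ, Nat.card_eq_fintype_card, Fintype.card_fun]
            simp
    have hlog : Real.log ((initSegs (OmegaUnion α β) n).ncard) ≤ (n : ℝ) * Real.log 2 := by
      rcases Nat.eq_zero_or_pos (initSegs (OmegaUnion α β) n).ncard with h0 | h0
      · rw [h0]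
        simp
        positivity
      · calc Real.log ((initSegs (OmegaUnion α β) n).ncard)
            ≤ Real.log ((2:ℝ) ^ n) := by
              apply Real.log_le_log (by exact_mod_cast h0)
              exact_mod_cast hcard
          _ = (n : ℝ) * Real.log 2 := by rw [Real.log_pow]
    rw [div_le_iff₀ hn0]
    linarith [hlog]

lemma growth_eq_zero (hadm : Admissible α β)
    (hF : ∀ y : ℝ, 1/2 ≤ y → y < 1 → 0 < Fgap α β y) :
    growth (OmegaUnion α β) = 0 := by
  have hge : 0 ≤ growth (OmegaUnion α β) := by
    apply Filter.le_limsup_of_frequently_le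
    · exact Filter.Frequently.of_forall (fun n => aseq_nonneg hadm n)
    · exact ⟨Real.log 2, Filter.eventually_map.mpr (Filter.Eventually.of_forall aseq_le_log2)⟩
  have hle : growth (OmegaUnion α β) ≤ 0 := by
    apply le_of_forall_pos_le_add
    intro ε hε
    set y : ℝ := max (1/2) (Real.exp (-ε)) with hy
    have hyl : 1/2 ≤ y := le_max_left _ _
    have hyr : y < 1 := by
      rw [hy]
      apply max_lt (by norm_num)
      rw [Real.exp_lt_one_iff]
      linarith
    have h1 := growth_le hadm hF hyl hyr
    have h2 : Real.log y⁻¹ ≤ ε := by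
      have hy0 : (0:ℝ) < y := lt_of_lt_of_le (by norm_num) hyl
      rw [Real.log_inv]
      have : Real.exp (-ε) ≤ y := le_max_right _ _
      have := Real.log_le_log (Real.exp_pos _) this
      rw [Real.log_exp] at this
      linarith
    linarith
  linarith

lemma Fgap_continuousOn {c : ℝ} (hc : 1/2 ≤ c) (hc1 : c < 1) :
    ContinuousOn (Fgap α β) (Set.Icc (0:ℝ) c) := by
  have h2L : (0:ℝ) ≤ 2 * Lip c := by
    have := Lip_nonneg (le_trans (by norm_num) hc)
    linarith
  have lw : LipschitzOnWith (Real.toNNReal (2 * Lip c)) (Fgap α β) (Set.Icc (0:ℝ) c) := by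
    apply LipschitzOnWith.of_dist_le_mul
    intro a ha b hb
    rw [Real.dist_eq, Real.dist_eq, Real.coe_toNNReal _ h2L]
    have l1 := val_lip hc hc1 ha hb α
    have l2 := val_lip hc hc1 ha hb β
    calc |Fgap α β a - Fgap α β b|
        = |(val a β - val b β) - (val a α - val b α)| := by rw [Fgap, Fgap]; ring_nf
      _ ≤ |val a β - val b β| + |val a α - val b α| := abs_sub _ _
      _ ≤ Lip c * |a - b| + Lip c * |a - b| := add_le_add l2 l1
      _ = 2 * Lip c * |a - b| := by ring
  exact lw.continuousOn

end Final



/-- For an admissible non-null pair `(α,β)` there is `x ∈ [1/2,1)` with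
`Σ α_n x^n = Σ β_n x^n`. -/
theorem stmt_0 (α β : Omega) (hadm : Admissible α β)
    (hnonnull : growth (OmegaUnion α β) ≠ 0) :
    ∃ x : ℝ, 1/2 ≤ x ∧ x < 1 ∧ seriesEq α β x := by
  by_cases hex : ∃ x : ℝ, 1/2 ≤ x ∧ x < 1 ∧ Fgap α β x ≤ 0
  · obtain ⟨x₀, hx₀l, hx₀r, hx₀⟩ := hex
    have hhalf : 0 ≤ Fgap α β (1/2) := by
      have := val_mono_half (Or.inl (lexLt_alpha_beta hadm) : lexLe α β)
      rw [Fgap]; linarith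
    have hcont : ContinuousOn (Fgap α β) (Set.Icc (1/2) x₀) :=
      (Fgap_continuousOn hx₀l hx₀r).mono (Set.Icc_subset_Icc_left (by norm_num))
    have hivt := intermediate_value_Icc' hx₀l hcont
    have h0mem : (0:ℝ) ∈ Set.Icc (Fgap α β x₀) (Fgap α β (1/2)) := ⟨hx₀, hhalf⟩
    obtain ⟨x, hxIcc, hxeq⟩ := hivt h0mem
    refine ⟨x, hxIcc.1, lt_of_le_of_lt hxIcc.2 hx₀r, ?_⟩
    have h : val x α = val x β := by
      rw [Fgap] at hxeq
      linarith [hxeq.le, hxeq.ge]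
    exact h
  · push_neg at hex
    have hF : ∀ y : ℝ, 1/2 ≤ y → y < 1 → 0 < Fgap α β y := fun y h1 h2 => hex y h1 h2
    exact absurd (growth_eq_zero hadm hF) hnonnull
end

section
/- Let (α,β) be an admissible pair such that α_2 = 1 and β_2 = 0 (so α begins 011 and β begins 100), and assume that α_3 = 1 or β_3 = 0. Then h(Ω_{(α,β)}) > 0; that is, (α,β) is non-null. -/
open scoped Classical

/-! ### Auxiliary material for `stmt_7` -/

lemma shift_iter (ω : Omega) (n k : ℕ) : shift^[n] ω k = ω (n + k) := by
  induction n generalizing k with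
  | zero => simp
  | succ n ih =>
      rw [Function.iterate_succ_apply']
      show shift^[n] ω (k+1) = _
      rw [ih]; congr 1; omega

/-- If `σ ≤ β` with `σ 0 = true` and `β` beginning `100`, then `σ` begins `100`. -/
lemma le_beta_aux (σ β : Omega) (hle : lexLe σ β) (hσ0 : σ 0 = true)
    (hβ1 : β 1 = false) (hβ2 : β 2 = false) :
    σ 1 = false ∧ σ 2 = false := by
  rcases hle with ⟨j, hag, hj⟩ | rfl
  · rw [Bool.lt_iff] at hj
    match j, hj with
    | 0, hj => rw [hσ0] at hj; exact absurd hj.1 (by simp)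
    | 1, hj => rw [hβ1] at hj; exact absurd hj.2 (by simp)
    | 2, hj => rw [hβ2] at hj; exact absurd hj.2 (by simp)
    | (m+3), hj =>
        exact ⟨(hag 1 (by omega)).trans hβ1, (hag 2 (by omega)).trans hβ2⟩
  · exact ⟨hβ1, hβ2⟩

/-- Variant reaching one bit further. -/
lemma le_beta_aux' (σ β : Omega) (hle : lexLe σ β) (hσ0 : σ 0 = true)
    (hβ1 : β 1 = false) (hβ2 : β 2 = false) (hβ3 : β 3 = false) :
    σ 1 = false ∧ σ 2 = false ∧ σ 3 = false := by
  rcases hle with ⟨j, hag, hj⟩ | rfl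
  · rw [Bool.lt_iff] at hj
    match j, hj with
    | 0, hj => rw [hσ0] at hj; exact absurd hj.1 (by simp)
    | 1, hj => rw [hβ1] at hj; exact absurd hj.2 (by simp)
    | 2, hj => rw [hβ2] at hj; exact absurd hj.2 (by simp)
    | 3, hj => rw [hβ3] at hj; exact absurd hj.2 (by simp)
    | (m+4), hj =>
        exact ⟨(hag 1 (by omega)).trans hβ1, (hag 2 (by omega)).trans hβ2,
          (hag 3 (by omega)).trans hβ3⟩
  · exact ⟨hβ1, hβ2, hβ3⟩

/-- Case `α = 0111…`, `β = 100…`: any string avoiding `111` and `00` in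
positions `1,2,3` is not in `(α, β]`. -/
lemma not_mem_Ioc1 (α β σ : Omega)
    (hα1 : α 1 = true) (hα2 : α 2 = true) (hα3 : α 3 = true)
    (hβ1 : β 1 = false) (hβ2 : β 2 = false)
    (h111 : σ 1 = false ∨ σ 2 = false ∨ σ 3 = false)
    (h00 : σ 1 = true ∨ σ 2 = true) :
    ¬ (lexLt α σ ∧ lexLe σ β) := by
  rintro ⟨⟨k, hag, hk⟩, hle⟩
  rw [Bool.lt_iff] at hk
  match k, hk with
  | 0, hk =>
      obtain ⟨h1, h2⟩ := le_beta_aux σ β hle hk.2 hβ1 hβ2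
      rcases h00 with h | h
      · rw [h1] at h; exact absurd h (by simp)
      · rw [h2] at h; exact absurd h (by simp)
  | 1, hk => rw [hα1] at hk; exact absurd hk.1 (by simp)
  | 2, hk => rw [hα2] at hk; exact absurd hk.1 (by simp)
  | 3, hk => rw [hα3] at hk; exact absurd hk.1 (by simp)
  | (m+4), hk =>
      have h1 : σ 1 = true := (hag 1 (by omega)).symm.trans hα1
      have h2 : σ 2 = true := (hag 2 (by omega)).symm.trans hα2
      have h3 : σ 3 = true := (hag 3 (by omega)).symm.trans hα3
      rcases h111 with h | h | h
      · rw [h1] at h; exact absurd h (by simp)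
      · rw [h2] at h; exact absurd h (by simp)
      · rw [h3] at h; exact absurd h (by simp)

/-- Case `α = 011…`, `β = 1000…`: any string avoiding `000` and `11` in
positions `1,2,3` is not in `(α, β]`. -/
lemma not_mem_Ioc2 (α β σ : Omega)
    (hα1 : α 1 = true) (hα2 : α 2 = true)
    (hβ1 : β 1 = false) (hβ2 : β 2 = false) (hβ3 : β 3 = false)
    (h000 : σ 1 = true ∨ σ 2 = true ∨ σ 3 = true)
    (h11 : σ 1 = false ∨ σ 2 = false) :
    ¬ (lexLt α σ ∧ lexLe σ β) := by
  rintro ⟨⟨k, hag, hk⟩, hle⟩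
  rw [Bool.lt_iff] at hk
  match k, hk with
  | 0, hk =>
      obtain ⟨h1, h2, h3⟩ := le_beta_aux' σ β hle hk.2 hβ1 hβ2 hβ3
      rcases h000 with h | h | h
      · rw [h1] at h; exact absurd h (by simp)
      · rw [h2] at h; exact absurd h (by simp)
      · rw [h3] at h; exact absurd h (by simp)
  | 1, hk => rw [hα1] at hk; exact absurd hk.1 (by simp)
  | 2, hk => rw [hα2] at hk; exact absurd hk.1 (by simp)
  | (m+3), hk =>
      have h1 : σ 1 = true := (hag 1 (by omega)).symm.trans hα1
      have h2 : σ 2 = true := (hag 2 (by omega)).symm.trans hα2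
      rcases h11 with h | h
      · rw [h1] at h; exact absurd h (by simp)
      · rw [h2] at h; exact absurd h (by simp)

/-- Concatenation of the length-5 blocks `01011` (for `false`) and `01101`
(for `true`) according to the selector `s`. -/
def Fblk (s : ℕ → Bool) : Omega := fun n =>
  if n % 5 = 0 then false
  else if n % 5 = 1 then true
  else if n % 5 = 2 then s (n / 5)
  else if n % 5 = 3 then !(s (n / 5))
  else true

lemma Fblk_no00 (s : ℕ → Bool) (n : ℕ) :
    Fblk s n = true ∨ Fblk s (n + 1) = true := by
  have h5 : n % 5 = 0 ∨ n % 5 = 1 ∨ n % 5 = 2 ∨ n % 5 = 3 ∨ n % 5 = 4 := by omega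
  rcases h5 with h | h | h | h | h
  · have h' : (n+1) % 5 = 1 := by omega
    right; simp [Fblk, h']
  · have h' : (n+1) % 5 = 2 := by omega
    left; simp [Fblk, h]
  · have h' : (n+1) % 5 = 3 := by omega
    have hq : (n+1) / 5 = n / 5 := by omega
    rcases Bool.eq_false_or_eq_true (s (n / 5)) with hs | hs
    · left; simp [Fblk, h, hs]
    · right; simp [Fblk, h', hq, hs]
  · have h' : (n+1) % 5 = 4 := by omega
    right; simp [Fblk, h']
  · left; simp [Fblk, h]

lemma Fblk_no111 (s : ℕ → Bool) (n : ℕ) :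
    Fblk s n = false ∨ Fblk s (n + 1) = false ∨ Fblk s (n + 2) = false := by
  have h5 : n % 5 = 0 ∨ n % 5 = 1 ∨ n % 5 = 2 ∨ n % 5 = 3 ∨ n % 5 = 4 := by omega
  rcases h5 with h | h | h | h | h
  · left; simp [Fblk, h]
  · have h1 : (n+1) % 5 = 2 := by omega
    have h2 : (n+2) % 5 = 3 := by omega
    have hq1 : (n+1) / 5 = n / 5 := by omega
    have hq2 : (n+2) / 5 = n / 5 := by omega
    rcases Bool.eq_false_or_eq_true (s (n / 5)) with hs | hs
    · right; right; simp [Fblk, h2, hq2, hs]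
    · right; left; simp [Fblk, h1, hq1, hs]
  · have h1 : (n+1) % 5 = 3 := by omega
    have hq1 : (n+1) / 5 = n / 5 := by omega
    rcases Bool.eq_false_or_eq_true (s (n / 5)) with hs | hs
    · right; left; simp [Fblk, h1, hq1, hs]
    · left; simp [Fblk, h, hs]
  · have h2 : (n+2) % 5 = 0 := by omega
    right; right; simp [Fblk, h2]
  · have h1 : (n+1) % 5 = 0 := by omega
    right; left; simp [Fblk, h1]

lemma Fblk_at (s : ℕ → Bool) (q : ℕ) : Fblk s (5 * q + 2) = s q := by
  have h : (5 * q + 2) % 5 = 2 := by omega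
  have hq : (5 * q + 2) / 5 = q := by omega
  simp [Fblk, h, hq]

/-- Lower bound on the number of initial segments. -/
lemma initSegs_card_lower (Γ : Set Omega) (H : (ℕ → Bool) → Omega)
    (hmem : ∀ s, H s ∈ Γ)
    (hinj : ∀ s t : ℕ → Bool, ∀ q : ℕ,
      H s (5 * q + 2) = H t (5 * q + 2) → s q = t q)
    (n : ℕ) : 2 ^ (n / 5) ≤ (initSegs Γ n).ncard := by
  classical
  set m := n / 5 with hm
  have hfin : (initSegs Γ n).Finite := Set.toFinite _
  set ext : (Fin m → Bool) → (ℕ → Bool) :=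
    fun t q => if h : q < m then t ⟨q, h⟩ else false with hext
  set φ : (Fin m → Bool) → (Fin n → Bool) :=
    fun t i => H (ext t) i with hφ
  have hφinj : Function.Injective φ := by
    intro t1 t2 h
    funext q
    have hidx : (5 : ℕ) * q + 2 < n := by
      have := q.2
      omega
    have h1 : H (ext t1) (5 * q + 2) = H (ext t2) (5 * q + 2) := by
      have := congrFun h ⟨5 * q + 2, hidx⟩
      simpa [φ] using this
    have h2 := hinj (ext t1) (ext t2) q h1
    simpa [ext, q.2] using h2
  have hsub : Set.range φ ⊆ initSegs Γ n := by
    rintro x ⟨t, rfl⟩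
    exact ⟨H (ext t), hmem (ext t), rfl⟩
  calc (2 : ℕ) ^ m = Nat.card (Fin m → Bool) := by
        simp [Nat.card_eq_fintype_card]
    _ = (Set.range φ).ncard := by
        rw [← Set.image_univ, Set.ncard_image_of_injective _ hφinj,
          Set.ncard_univ]
    _ ≤ (initSegs Γ n).ncard := Set.ncard_le_ncard hsub hfin

/-- Positivity of growth from the counting bound. -/
lemma growth_pos_of_card (Γ : Set Omega)
    (hcard : ∀ n, 2 ^ (n / 5) ≤ (initSegs Γ n).ncard) :
    0 < growth Γ := by
  have hlog2 : (0 : ℝ) < Real.log 2 := Real.log_pos (by norm_num)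
  have hncpos : ∀ n : ℕ, 0 < (initSegs Γ n).ncard := fun n =>
    lt_of_lt_of_le (Nat.pow_pos (by norm_num)) (hcard n)
  have hbdd : Filter.IsBoundedUnder (· ≤ ·) Filter.atTop
      (fun n : ℕ => Real.log ((initSegs Γ n).ncard) / (n : ℝ)) := by
    apply Filter.isBoundedUnder_of
    refine ⟨Real.log 2, fun n => ?_⟩
    rcases Nat.eq_zero_or_pos n with rfl | hn
    · simp [hlog2.le]
    · have hle : (initSegs Γ n).ncard ≤ 2 ^ n := by
        have := Set.ncard_le_ncard (Set.subset_univ (initSegs Γ n))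
          (Set.finite_univ (α := Fin n → Bool))
        simpa [Set.ncard_univ, Nat.card_eq_fintype_card] using this
      have hlogle : Real.log ((initSegs Γ n).ncard) ≤ n * Real.log 2 := by
        calc Real.log ((initSegs Γ n).ncard) ≤ Real.log ((2:ℝ) ^ n) := by
              apply Real.log_le_log (by exact_mod_cast hncpos n)
              exact_mod_cast hle
          _ = n * Real.log 2 := by rw [Real.log_pow]
      have hnpos : (0 : ℝ) < n := by exact_mod_cast hn
      rw [div_le_iff₀ hnpos]
      calc Real.log ((initSegs Γ n).ncard) ≤ n * Real.log 2 := hlogle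
        _ = Real.log 2 * n := by ring
  have hev : ∀ᶠ n : ℕ in Filter.atTop,
      Real.log 2 / 10 ≤ Real.log ((initSegs Γ n).ncard) / (n : ℝ) := by
    refine Filter.eventually_atTop.2 ⟨8, fun n hn => ?_⟩
    have hm : n ≤ 10 * (n / 5) := by omega
    have hnpos : (0 : ℝ) < n := by exact_mod_cast (by omega : 0 < n)
    have h1 : ((2 : ℝ) ^ (n / 5)) ≤ ((initSegs Γ n).ncard : ℝ) := by
      exact_mod_cast hcard n
    have h2 : ((n / 5 : ℕ) : ℝ) * Real.log 2 ≤
        Real.log ((initSegs Γ n).ncard) := by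
      calc ((n / 5 : ℕ) : ℝ) * Real.log 2 = Real.log ((2:ℝ) ^ (n / 5)) := by
            rw [Real.log_pow]
        _ ≤ _ := Real.log_le_log (by positivity) h1
    rw [div_le_div_iff₀ (by norm_num) hnpos]
    have hmr : (n : ℝ) ≤ 10 * ((n / 5 : ℕ) : ℝ) := by exact_mod_cast hm
    nlinarith [h2, hlog2, hmr]
  have := Filter.le_limsup_of_frequently_le hev.frequently hbdd
  calc (0 : ℝ) < Real.log 2 / 10 := by positivity
    _ ≤ growth Γ := this

/-- If `(α,β)` is an admissible pair with `α` beginning `011` and `β`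
beginning `100`, and moreover `α_3 = 1` or `β_3 = 0`, then `h(Ω_{(α,β)}) > 0`, i.e.
`(α,β)` is non-null. -/
theorem stmt_7 (α β : Omega) (hadm : Admissible α β)
    (hα2 : α 2 = true) (hβ2 : β 2 = false)
    (h3 : α 3 = true ∨ β 3 = false) :
    0 < growth (OmegaUnion α β) := by
  obtain ⟨hα0, hα1, hβ0, hβ1, -, -⟩ := hadm
  rcases h3 with hα3 | hβ3
  · -- `α` begins `0111`: use block sequences avoiding `00` and `111`.
    apply growth_pos_of_card
    intro n
    apply initSegs_card_lower (OmegaUnion α β) Fblk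
    · intro s
      left
      intro k
      apply not_mem_Ioc1 α β (shift^[k] (Fblk s)) hα1 hα2 hα3 hβ1 hβ2
      · have h := Fblk_no111 s (k + 1)
        rw [show k + 1 + 1 = k + 2 from rfl, show k + 1 + 2 = k + 3 from rfl]
          at h
        simpa [shift_iter] using h
      · have h := Fblk_no00 s (k + 1)
        rw [show k + 1 + 1 = k + 2 from rfl] at h
        simpa [shift_iter] using h
    · intro s t q h
      rwa [Fblk_at, Fblk_at] at h
  · -- `β` begins `1000`: use the bitwise complements of the above.
    apply growth_pos_of_card
    intro n
    apply initSegs_card_lower (OmegaUnion α β) (fun s => fun m => !(Fblk s m))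
    · intro s
      left
      intro k
      apply not_mem_Ioc2 α β (shift^[k] fun m => !(Fblk s m))
        hα1 hα2 hβ1 hβ2 hβ3
      · have h := Fblk_no111 s (k + 1)
        rw [show k + 1 + 1 = k + 2 from rfl, show k + 1 + 2 = k + 3 from rfl]
          at h
        rcases h with h | h | h
        · left; simp [shift_iter, h]
        · right; left; simp [shift_iter, h]
        · right; right; simp [shift_iter, h]
      · have h := Fblk_no00 s (k + 1)
        rw [show k + 1 + 1 = k + 2 from rfl] at h
        rcases h with h | h
        · left; simp [shift_iter, h]
        · right; simp [shift_iter, h]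
    · intro s t q h
      simp only [Fblk_at] at h
      exact Bool.not_inj h
end

section
/- Let B and p be real numbers with 1 < B ≤ 2, b := 1/B, and 1−b ≤ p ≤ b. Then for every y ∈ [0,1], π_b(τ̂_{(B,p,−)}(y)) = y and π_b(τ̂_{(B,p,+)}(y)) = y; that is, both itinerary maps are sections of the projection map π_b. -/
open scoped Classical

/-- The map `f_{(B,p,−)}`. -/
noncomputable def fMinus (B p : ℝ) : ℝ → ℝ :=
  fun x => if x ≤ p then B * x else B * x + 1 - B

/-- The map `f_{(B,p,+)}`. -/
noncomputable def fPlus (B p : ℝ) : ℝ → ℝ :=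
  fun x => if x < p then B * x else B * x + 1 - B

/-- The itinerary map `τ̂_{(B,p,−)}`. -/
noncomputable def itinMinus (B p : ℝ) (y : ℝ) : Omega :=
  fun k => if p < (fMinus B p)^[k] y then true else false

/-- The itinerary map `τ̂_{(B,p,+)}`. -/
noncomputable def itinPlus (B p : ℝ) (y : ℝ) : Omega :=
  fun k => if p ≤ (fPlus B p)^[k] y then true else false

lemma key_section (b : ℝ) (hb0 : 0 < b) (hb1 : b < 1) (f : ℝ → ℝ) (s : ℝ → Bool)
    (hstep : ∀ y ∈ Set.Icc (0:ℝ) 1,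
      f y ∈ Set.Icc (0:ℝ) 1 ∧ y = (if s y then 1 - b else 0) + b * f y)
    (y : ℝ) (hy : y ∈ Set.Icc (0:ℝ) 1) :
    proj b (fun k => s (f^[k] y)) = y := by
  set g : ℕ → ℝ := fun k => (if s (f^[k] y) then 1 - b else 0) * b ^ k with hg
  have main : ∀ n : ℕ, f^[n] y ∈ Set.Icc (0:ℝ) 1 ∧
      y = (∑ k ∈ Finset.range n, g k) + b ^ n * f^[n] y := by
    intro n
    induction n with
    | zero => simpa using hy
    | succ n ih =>
      obtain ⟨hmem, heq⟩ := ih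
      obtain ⟨hmem', heq'⟩ := hstep _ hmem
      rw [Function.iterate_succ_apply']
      refine ⟨hmem', ?_⟩
      calc y = (∑ k ∈ Finset.range n, g k) + b ^ n * f^[n] y := heq
        _ = (∑ k ∈ Finset.range n, g k)
            + b ^ n * ((if s (f^[n] y) then 1 - b else 0) + b * f (f^[n] y)) := by
              rw [← heq']
        _ = (∑ k ∈ Finset.range (n+1), g k) + b ^ (n+1) * f (f^[n] y) := by
              rw [Finset.sum_range_succ]; simp only [hg]; ring
  have hsum : Summable g := by
    apply Summable.of_norm_bounded (summable_geometric_of_lt_one hb0.le hb1)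
    intro k
    simp only [hg, norm_mul, Real.norm_eq_abs]
    rw [abs_of_nonneg (pow_nonneg hb0.le k)]
    split_ifs with hc
    · rw [abs_of_nonneg (by linarith : (0:ℝ) ≤ 1 - b)]
      nlinarith [pow_nonneg hb0.le k]
    · simp [pow_nonneg hb0.le k]
  have h1 : Filter.Tendsto (fun n => ∑ k ∈ Finset.range n, g k) Filter.atTop
      (nhds (∑' k, g k)) := hsum.hasSum.tendsto_sum_nat
  have h2 : Filter.Tendsto (fun n : ℕ => b ^ n * f^[n] y) Filter.atTop (nhds 0) := by
    refine squeeze_zero_norm (fun n => ?_) (tendsto_pow_atTop_nhds_zero_of_lt_one hb0.le hb1)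
    have hm := (main n).1
    rw [norm_mul, Real.norm_eq_abs, Real.norm_eq_abs, abs_of_nonneg (pow_nonneg hb0.le n)]
    have h4 : |f^[n] y| ≤ 1 := by rw [abs_le]; exact ⟨by linarith [hm.1], hm.2⟩
    nlinarith [pow_nonneg hb0.le n, abs_nonneg (f^[n] y)]
  have h3 : Filter.Tendsto (fun n => ∑ k ∈ Finset.range n, g k) Filter.atTop (nhds y) := by
    have : (fun n => ∑ k ∈ Finset.range n, g k)
        = fun n : ℕ => y - b ^ n * f^[n] y := by
      funext n
      have := (main n).2
      linarith
    rw [this]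
    simpa using Filter.Tendsto.sub (tendsto_const_nhds (x := y)) h2
  have htsum : (∑' k, g k) = y := tendsto_nhds_unique h1 h3
  have hproj : proj b (fun k => s (f^[k] y)) = ∑' k, g k := by
    rw [proj, ← tsum_mul_left]
    apply tsum_congr
    intro k
    by_cases hc : s (f^[k] y) = true <;> simp [hg, hc] <;> ring
  rw [hproj, htsum]

/-- For `1 < B ≤ 2`, `b = 1/B` and `1 − b ≤ p ≤ b`, both itinerary maps
are sections of `π_b`: for every `y ∈ [0,1]`, `π_b(τ̂_{(B,p,−)}(y)) = y` and
`π_b(τ̂_{(B,p,+)}(y)) = y`. -/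
theorem stmt_9 (B p b : ℝ) (hB1 : 1 < B) (hB2 : B ≤ 2) (hb : b = 1 / B)
    (hp1 : 1 - b ≤ p) (hp2 : p ≤ b) :
    ∀ y ∈ Set.Icc (0 : ℝ) 1,
      proj b (itinMinus B p y) = y ∧ proj b (itinPlus B p y) = y := by
  have hB0 : (0:ℝ) < B := by linarith
  have hb0 : 0 < b := by rw [hb]; positivity
  have hb1 : b < 1 := by rw [hb]; rw [div_lt_one hB0]; linarith
  have hbB : b * B = 1 := by rw [hb]; field_simp
  intro y hy
  constructor
  · have := key_section b hb0 hb1 (fMinus B p)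
      (fun x => if p < x then true else false) ?_ y hy
    · convert this using 2; rfl
    · intro z hz
      obtain ⟨hz0, hz1⟩ := hz
      by_cases hzp : z ≤ p
      · have hf : fMinus B p z = B * z := by rw [fMinus, if_pos hzp]
        refine ⟨⟨by rw [hf]; positivity, by rw [hf]; nlinarith⟩, ?_⟩
        rw [hf, if_neg (by simp [not_lt.mpr hzp])]
        linear_combination -z * hbB
      · push_neg at hzp
        have hf : fMinus B p z = B * z + 1 - B := by rw [fMinus, if_neg (not_le.mpr hzp)]
        refine ⟨⟨by rw [hf]; nlinarith, by rw [hf]; nlinarith⟩, ?_⟩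
        rw [hf, if_pos (by simp [hzp])]
        linear_combination (1 - z) * hbB
  · have := key_section b hb0 hb1 (fPlus B p)
      (fun x => if p ≤ x then true else false) ?_ y hy
    · convert this using 2; rfl
    · intro z hz
      obtain ⟨hz0, hz1⟩ := hz
      by_cases hzp : z < p
      · have hf : fPlus B p z = B * z := by rw [fPlus, if_pos hzp]
        refine ⟨⟨by rw [hf]; positivity, by rw [hf]; nlinarith⟩, ?_⟩
        rw [hf, if_neg (by simp [not_le.mpr hzp])]
        linear_combination -z * hbB
      · push_neg at hzp
        have hf : fPlus B p z = B * z + 1 - B := by rw [fPlus, if_neg (not_lt.mpr hzp)]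
        refine ⟨⟨by rw [hf]; nlinarith, by rw [hf]; nlinarith⟩, ?_⟩
        rw [hf, if_pos (by simp [hzp])]
        linear_combination (1 - z) * hbB
end

section
/- Let (α,β) be an admissible non-null pair, b the least x ∈ [1/2,1) with Σ_{n≥0} α_n·xⁿ = Σ_{n≥0} β_n·xⁿ, B := 1/b, and p := π_b(α). Let x ≥ 0 be a real number and let N be the least nonnegative integer such that y := b^N·(1−b)·x < p (such N exists). Let σ := τ̂_{(B,p,−)}(y) and define the decimal d by d(j) = σ_{N+j} for j ≥ −N and d(j) = 0 for j < −N. Then d ∈ Ω^•_{(α,β,−)} and Σ_{j∈ℤ} d(j)·B^{−j} = x. The analogous statement holds with τ̂_{(B,p,+)} in place of τ̂_{(B,p,−)} and Ω^•_{(α,β,+)} in place of Ω^•_{(α,β,−)}. -/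
open scoped Classical

namespace S10

lemma bool_lt_iff (x y : Bool) : x < y ↔ x = false ∧ y = true := by
  cases x <;> cases y <;> simp <;> decide

lemma lexLt_irrefl (σ : Omega) : ¬ lexLt σ σ := by
  rintro ⟨k, -, hk⟩; exact lt_irrefl _ hk

lemma lex_total (σ τ : Omega) : lexLt σ τ ∨ σ = τ ∨ lexLt τ σ := by
  by_cases h : σ = τ
  · exact Or.inr (Or.inl h)
  · have hne : ∃ k, σ k ≠ τ k := by
      by_contra hc; push_neg at hc; exact h (funext hc)
    classical
    let k := Nat.find hne
    have hk : σ k ≠ τ k := Nat.find_spec hne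
    have hag : ∀ i, i < k → σ i = τ i := fun i hi => by
      by_contra hci
      have : k ≤ i := Nat.find_le hci
      omega
    have : σ k < τ k ∨ τ k < σ k := by
      rcases Bool.eq_false_or_eq_true (σ k) with h1 | h1 <;>
        rcases Bool.eq_false_or_eq_true (τ k) with h2 | h2 <;>
          simp [h1, h2] at hk ⊢ <;> decide
    rcases this with hlt | hgt
    · exact Or.inl ⟨k, hag, hlt⟩
    · exact Or.inr (Or.inr ⟨k, fun i hi => (hag i hi).symm, hgt⟩)

lemma lexLt_trans {σ τ ρ : Omega} (h1 : lexLt σ τ) (h2 : lexLt τ ρ) : lexLt σ ρ := by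
  obtain ⟨k1, a1, l1⟩ := h1
  obtain ⟨k2, a2, l2⟩ := h2
  rcases lt_trichotomy k1 k2 with h | h | h
  · exact ⟨k1, fun i hi => (a1 i hi).trans (a2 i (hi.trans h)), by rw [← a2 k1 h]; exact l1⟩
  · subst h; exact ⟨k1, fun i hi => (a1 i hi).trans (a2 i hi), lt_trans l1 l2⟩
  · exact ⟨k2, fun i hi => (a1 i (hi.trans h)).trans (a2 i hi), by rw [a1 k2 h]; exact l2⟩

lemma lexLt_asymm {σ τ : Omega} (h1 : lexLt σ τ) (h2 : lexLt τ σ) : False :=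
  lexLt_irrefl σ (lexLt_trans h1 h2)

lemma lexLe_refl (σ : Omega) : lexLe σ σ := Or.inr rfl

lemma lexLe_trans {σ τ ρ : Omega} (h1 : lexLe σ τ) (h2 : lexLe τ ρ) : lexLe σ ρ := by
  rcases h1 with h1 | rfl
  · rcases h2 with h2 | rfl
    · exact Or.inl (lexLt_trans h1 h2)
    · exact Or.inl h1
  · exact h2

lemma lexLt_of_lexLt_of_lexLe {σ τ ρ : Omega} (h1 : lexLt σ τ) (h2 : lexLe τ ρ) : lexLt σ ρ := by
  rcases h2 with h2 | rfl
  · exact lexLt_trans h1 h2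
  · exact h1

lemma lexLt_of_lexLe_of_lexLt {σ τ ρ : Omega} (h1 : lexLe σ τ) (h2 : lexLt τ ρ) : lexLt σ ρ := by
  rcases h1 with h1 | rfl
  · exact lexLt_trans h1 h2
  · exact h2

lemma not_lexLt_of_lexLe {σ τ : Omega} (h : lexLe σ τ) : ¬ lexLt τ σ := by
  intro h2
  rcases h with h | rfl
  · exact lexLt_asymm h h2
  · exact lexLt_irrefl _ h2

lemma lexLe_of_not_lexLt {σ τ : Omega} (h : ¬ lexLt σ τ) : lexLe τ σ := by
  rcases lex_total σ τ with h1 | rfl | h1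
  · exact absurd h1 h
  · exact lexLe_refl _
  · exact Or.inl h1

lemma not_lexLe_of_lexLt {σ τ : Omega} (h : lexLt σ τ) : ¬ lexLe τ σ :=
  fun h2 => not_lexLt_of_lexLe h2 h

lemma lexLt_of_not_lexLe {σ τ : Omega} (h : ¬ lexLe σ τ) : lexLt τ σ := by
  rcases lex_total σ τ with h1 | rfl | h1
  · exact absurd (Or.inl h1) h
  · exact absurd (lexLe_refl _) h
  · exact h1

lemma shift_iterate : ∀ (n : ℕ) (γ : Omega) (k : ℕ), (shift^[n] γ) k = γ (k + n)
  | 0, γ, k => rfl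
  | n+1, γ, k => by
    rw [Function.iterate_succ_apply, shift_iterate n (shift γ) k]
    show γ (k + n + 1) = _
    congr 1


lemma summable_proj (γ : Omega) {x : ℝ} (hx0 : 0 ≤ x) (hx1 : x < 1) :
    Summable (fun k : ℕ => (if γ k then (1 : ℝ) else 0) * x ^ k) := by
  apply Summable.of_nonneg_of_le (fun k => by positivity)
    (fun k => ?_) (summable_geometric_of_lt_one hx0 hx1)
  by_cases h : γ k <;> simp [h] <;> positivity

lemma tsum_proj_nonneg (γ : Omega) {x : ℝ} (hx0 : 0 ≤ x) :
    0 ≤ ∑' k : ℕ, (if γ k then (1 : ℝ) else 0) * x ^ k :=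
  tsum_nonneg (fun k => by positivity)

lemma tsum_proj_le (γ : Omega) {x : ℝ} (hx0 : 0 ≤ x) (hx1 : x < 1) :
    (∑' k : ℕ, (if γ k then (1 : ℝ) else 0) * x ^ k) ≤ (1 - x)⁻¹ := by
  have h1 : (∑' k : ℕ, (if γ k then (1 : ℝ) else 0) * x ^ k) ≤ ∑' k : ℕ, x ^ k := by
    apply Summable.tsum_le_tsum _ (summable_proj γ hx0 hx1) (summable_geometric_of_lt_one hx0 hx1)
    intro k
    by_cases h : γ k <;> simp [h] <;> positivity
  rwa [tsum_geometric_of_lt_one hx0 hx1] at h1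

lemma proj_nonneg (γ : Omega) {x : ℝ} (hx0 : 0 ≤ x) (hx1 : x < 1) : 0 ≤ proj x γ := by
  have := tsum_proj_nonneg γ hx0
  have h1 : (0:ℝ) ≤ 1 - x := by linarith
  exact mul_nonneg h1 this

lemma proj_le_one (γ : Omega) {x : ℝ} (hx0 : 0 ≤ x) (hx1 : x < 1) : proj x γ ≤ 1 := by
  have h1 := tsum_proj_le γ hx0 hx1
  have h2 : (0:ℝ) < 1 - x := by linarith
  calc (1-x) * ∑' k : ℕ, (if γ k then (1 : ℝ) else 0) * x ^ k
      ≤ (1-x) * (1-x)⁻¹ := by apply mul_le_mul_of_nonneg_left h1 (le_of_lt h2)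
    _ = 1 := mul_inv_cancel₀ (ne_of_gt h2)

lemma proj_shift_eq (γ : Omega) {x : ℝ} (hx0 : 0 ≤ x) (hx1 : x < 1) :
    proj x γ = (1 - x) * (if γ 0 then (1:ℝ) else 0) + x * proj x (shift γ) := by
  unfold proj
  rw [Summable.tsum_eq_zero_add (summable_proj γ hx0 hx1)]
  have h1 : ∀ k : ℕ, (if γ (k+1) then (1:ℝ) else 0) * x ^ (k+1)
      = x * ((if (shift γ) k then (1:ℝ) else 0) * x ^ k) := by
    intro k; simp only [shift]; ring
  rw [tsum_congr h1, tsum_mul_left]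
  ring

lemma proj_sub_prefix (x : ℝ) (hx0 : 0 ≤ x) (hx1 : x < 1) :
    ∀ (k : ℕ) (γ δ : Omega), (∀ i, i < k → γ i = δ i) →
    proj x γ - proj x δ = x ^ k * (proj x (shift^[k] γ) - proj x (shift^[k] δ))
  | 0, γ, δ, _ => by simp
  | (k+1), γ, δ, h => by
    have h0 : γ 0 = δ 0 := h 0 (Nat.succ_pos k)
    have hrec := proj_sub_prefix x hx0 hx1 k (shift γ) (shift δ)
      (fun i hi => h (i+1) (by omega))
    rw [proj_shift_eq γ hx0 hx1, proj_shift_eq δ hx0 hx1, h0]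
    have e1 : shift^[k] (shift γ) = shift^[k+1] γ := (Function.iterate_succ_apply shift k γ).symm
    have e2 : shift^[k] (shift δ) = shift^[k+1] δ := (Function.iterate_succ_apply shift k δ).symm
    rw [e1, e2] at hrec
    calc (1 - x) * (if δ 0 then (1:ℝ) else 0) + x * proj x (shift γ)
        - ((1 - x) * (if δ 0 then (1:ℝ) else 0) + x * proj x (shift δ))
        = x * (proj x (shift γ) - proj x (shift δ)) := by ring
      _ = x * (x ^ k * (proj x (shift^[k+1] γ) - proj x (shift^[k+1] δ))) := by rw [hrec]
      _ = x ^ (k+1) * (proj x (shift^[k+1] γ) - proj x (shift^[k+1] δ)) := by ring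

lemma proj_head_false (γ : Omega) {x : ℝ} (hx0 : 0 ≤ x) (hx1 : x < 1) (h : γ 0 = false) :
    proj x γ ≤ x := by
  rw [proj_shift_eq γ hx0 hx1, h]
  simp only [if_false, Bool.false_eq_true, mul_zero, zero_add]
  have := proj_le_one (shift γ) hx0 hx1
  nlinarith [proj_nonneg (shift γ) hx0 hx1]

lemma proj_head_true (γ : Omega) {x : ℝ} (hx0 : 0 ≤ x) (hx1 : x < 1) (h : γ 0 = true) :
    1 - x ≤ proj x γ := by
  rw [proj_shift_eq γ hx0 hx1, h]
  simp only [if_true]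
  have := proj_nonneg (shift γ) hx0 hx1
  nlinarith

lemma abs_pow_sub_pow_le {c x y : ℝ} (hx : x ∈ Set.Icc 0 c) (hy : y ∈ Set.Icc 0 c) (k : ℕ) :
    |x ^ k - y ^ k| ≤ (k : ℝ) * c ^ (k - 1) * |x - y| := by
  obtain ⟨hx0, hxc⟩ := hx
  obtain ⟨hy0, hyc⟩ := hy
  have hc0 : 0 ≤ c := le_trans hx0 hxc
  have key := geom_sum₂_mul x y k
  rw [← key, abs_mul]
  apply mul_le_mul_of_nonneg_right _ (abs_nonneg _)
  calc |∑ i ∈ Finset.range k, x ^ i * y ^ (k - 1 - i)|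
      ≤ ∑ i ∈ Finset.range k, |x ^ i * y ^ (k - 1 - i)| := Finset.abs_sum_le_sum_abs _ _
    _ ≤ ∑ _i ∈ Finset.range k, c ^ (k - 1) := by
        apply Finset.sum_le_sum
        intro i hi
        rw [Finset.mem_range] at hi
        rw [abs_mul, abs_pow, abs_pow, abs_of_nonneg hx0, abs_of_nonneg hy0]
        have h1 : x ^ i * y ^ (k - 1 - i) ≤ c ^ i * c ^ (k - 1 - i) := by
          apply mul_le_mul (pow_le_pow_left₀ hx0 hxc i) (pow_le_pow_left₀ hy0 hyc _)
            (by positivity) (by positivity)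
        rw [← pow_add] at h1
        have : i + (k - 1 - i) = k - 1 := by omega
        rwa [this] at h1
    _ = (k : ℝ) * c ^ (k - 1) := by
        rw [Finset.sum_const, Finset.card_range, nsmul_eq_mul]

lemma coef_lip {c x y : ℝ} (hx : x ∈ Set.Icc 0 c) (hy : y ∈ Set.Icc 0 c) (k : ℕ) :
    |(1 - x) * x ^ k - (1 - y) * y ^ k|
      ≤ ((k : ℝ) * c ^ (k - 1) + ((k : ℝ) + 1) * c ^ k) * |x - y| := by
  have h1 : (1 - x) * x ^ k - (1 - y) * y ^ k = (x ^ k - y ^ k) - (x ^ (k+1) - y ^ (k+1)) := by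
    ring
  rw [h1]
  have h2 := abs_pow_sub_pow_le hx hy k
  have h3 := abs_pow_sub_pow_le hx hy (k+1)
  have h4 : (k + 1 : ℕ) - 1 = k := by omega
  rw [h4] at h3
  calc |(x ^ k - y ^ k) - (x ^ (k+1) - y ^ (k+1))|
      ≤ |x ^ k - y ^ k| + |x ^ (k+1) - y ^ (k+1)| := abs_sub _ _
    _ ≤ (k : ℝ) * c ^ (k - 1) * |x - y| + ((k : ℝ) + 1) * c ^ k * |x - y| := by
        apply add_le_add h2
        have : ((k : ℝ) + 1) = ((k + 1 : ℕ) : ℝ) := by push_cast; ring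
        rw [this]; exact h3
    _ = ((k : ℝ) * c ^ (k - 1) + ((k : ℝ) + 1) * c ^ k) * |x - y| := by ring

noncomputable def Lsum (c : ℝ) : ℝ :=
  ∑' k : ℕ, ((k : ℝ) * c ^ (k - 1) + ((k : ℝ) + 1) * c ^ k)

lemma summable_Lsum {c : ℝ} (hc0 : 0 < c) (hc1 : c < 1) :
    Summable (fun k : ℕ => (k : ℝ) * c ^ (k - 1) + ((k : ℝ) + 1) * c ^ k) := by
  have habs : ‖c‖ < 1 := by rw [Real.norm_eq_abs, abs_of_nonneg hc0.le]; exact hc1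
  have hs : Summable (fun k : ℕ => (k : ℝ) * c ^ k) := by
    have := summable_pow_mul_geometric_of_norm_lt_one 1 habs
    simpa using this
  have h1 : Summable (fun k : ℕ => (k : ℝ) * c ^ (k - 1)) := by
    apply Summable.of_nonneg_of_le (fun k => by positivity)
      (fun k => ?_) (hs.mul_left c⁻¹)
    rcases Nat.eq_zero_or_pos k with rfl | hk
    · simp
    · have hck : c ^ k = c ^ (k - 1) * c := by
        rw [← pow_succ]; congr 1; omega
      rw [hck]
      have heq : c⁻¹ * ((k:ℝ) * (c ^ (k - 1) * c)) = (k:ℝ) * c ^ (k-1) := by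
        field_simp
      rw [heq]
  have h2 : Summable (fun k : ℕ => ((k : ℝ) + 1) * c ^ k) := by
    have := hs.add (summable_geometric_of_lt_one hc0.le hc1)
    apply this.congr
    intro k; ring
  exact h1.add h2

lemma proj_lip (γ : Omega) {c x y : ℝ} (hc0 : 0 < c) (hc1 : c < 1)
    (hx : x ∈ Set.Icc 0 c) (hy : y ∈ Set.Icc 0 c) :
    |proj x γ - proj y γ| ≤ Lsum c * |x - y| := by
  have hx1 : x < 1 := lt_of_le_of_lt hx.2 hc1
  have hy1 : y < 1 := lt_of_le_of_lt hy.2 hc1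
  have hfx : Summable (fun k : ℕ => (1 - x) * ((if γ k then (1:ℝ) else 0) * x ^ k)) :=
    (summable_proj γ hx.1 hx1).mul_left _
  have hfy : Summable (fun k : ℕ => (1 - y) * ((if γ k then (1:ℝ) else 0) * y ^ k)) :=
    (summable_proj γ hy.1 hy1).mul_left _
  have hpx : proj x γ = ∑' k : ℕ, (1 - x) * ((if γ k then (1:ℝ) else 0) * x ^ k) :=
    (tsum_mul_left).symm
  have hpy : proj y γ = ∑' k : ℕ, (1 - y) * ((if γ k then (1:ℝ) else 0) * y ^ k) :=
    (tsum_mul_left).symm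
  have hdiff : proj x γ - proj y γ
      = ∑' k : ℕ, ((1 - x) * ((if γ k then (1:ℝ) else 0) * x ^ k)
          - (1 - y) * ((if γ k then (1:ℝ) else 0) * y ^ k)) := by
    rw [hpx, hpy, Summable.tsum_sub hfx hfy]
  set u : ℕ → ℝ := fun k => ((k : ℝ) * c ^ (k - 1) + ((k : ℝ) + 1) * c ^ k) with hu
  have hbound : ∀ k : ℕ, |(1 - x) * ((if γ k then (1:ℝ) else 0) * x ^ k)
      - (1 - y) * ((if γ k then (1:ℝ) else 0) * y ^ k)| ≤ u k * |x - y| := by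
    intro k
    by_cases h : γ k
    · simp only [h, if_true, mul_one]
      have := coef_lip hx hy k
      simpa using this
    · simp only [h, if_false]
      simp only [Bool.false_eq_true, if_false]
      simp
      positivity
  have husum := summable_Lsum hc0 hc1
  have habs : Summable (fun k : ℕ => |(1 - x) * ((if γ k then (1:ℝ) else 0) * x ^ k)
      - (1 - y) * ((if γ k then (1:ℝ) else 0) * y ^ k)|) := by
    apply Summable.of_nonneg_of_le (fun k => abs_nonneg _) hbound
    exact husum.mul_right _
  rw [hdiff]
  calc |∑' k : ℕ, ((1 - x) * ((if γ k then (1:ℝ) else 0) * x ^ k)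
          - (1 - y) * ((if γ k then (1:ℝ) else 0) * y ^ k))|
      ≤ ∑' k : ℕ, |(1 - x) * ((if γ k then (1:ℝ) else 0) * x ^ k)
          - (1 - y) * ((if γ k then (1:ℝ) else 0) * y ^ k)| := by
        have := norm_tsum_le_tsum_norm (f := fun k : ℕ => (1 - x) * ((if γ k then (1:ℝ) else 0) * x ^ k)
          - (1 - y) * ((if γ k then (1:ℝ) else 0) * y ^ k)) (by simpa [Real.norm_eq_abs] using habs)
        simpa [Real.norm_eq_abs] using this
    _ ≤ ∑' k : ℕ, u k * |x - y| := Summable.tsum_le_tsum hbound habs (husum.mul_right _)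
    _ = Lsum c * |x - y| := by rw [tsum_mul_right]; rfl

lemma Lsum_nonneg {c : ℝ} (hc0 : 0 < c) (hc1 : c < 1) : 0 ≤ Lsum c :=
  tsum_nonneg (fun k => by positivity)

def Fset (α β : Omega) : Set Omega := {φ | (∃ n, φ = shift^[n] α) ∨ ∃ n, φ = shift^[n] β}

lemma alpha_mem_Fset (α β : Omega) : α ∈ Fset α β := Or.inl ⟨0, rfl⟩
lemma beta_mem_Fset (α β : Omega) : β ∈ Fset α β := Or.inr ⟨0, rfl⟩

lemma shift_mem_Fset {α β φ : Omega} (h : φ ∈ Fset α β) (j : ℕ) : shift^[j] φ ∈ Fset α β := by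
  rcases h with ⟨n, rfl⟩ | ⟨n, rfl⟩
  · exact Or.inl ⟨j + n, by rw [Function.iterate_add_apply]⟩
  · exact Or.inr ⟨j + n, by rw [Function.iterate_add_apply]⟩

lemma fact_head {α β : Omega} (hadm : Admissible α β) :
    ∀ φ ∈ Fset α β, (φ 0 = false → lexLe φ α) ∧ (φ 0 = true → lexLe β φ) := by
  obtain ⟨ha0, ha1, hb0, hb1, hc5, hc6⟩ := hadm
  rintro φ (⟨n, rfl⟩ | ⟨n, rfl⟩) <;> rw [shift_iterate, Nat.zero_add] <;> constructor
  · intro h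
    rcases lex_total (shift^[n] α) α with hlt | heq | hgt
    · exact Or.inl hlt
    · exact Or.inr heq
    · exfalso
      apply hc5 n
      refine ⟨hgt, Or.inl ⟨0, fun i hi => absurd hi (Nat.not_lt_zero i), ?_⟩⟩
      rw [shift_iterate, Nat.zero_add, h, hb0]
      exact Bool.false_lt_true
  · intro h
    have h1 : lexLt α (shift^[n] α) := by
      refine ⟨0, fun i hi => absurd hi (Nat.not_lt_zero i), ?_⟩
      rw [shift_iterate, Nat.zero_add, h, ha0]
      exact Bool.false_lt_true
    have h2 : ¬ lexLe (shift^[n] α) β := fun hle => hc5 n ⟨h1, hle⟩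
    exact Or.inl (lexLt_of_not_lexLe h2)
  · intro h
    have h1 : lexLt (shift^[n] β) β := by
      refine ⟨0, fun i hi => absurd hi (Nat.not_lt_zero i), ?_⟩
      rw [shift_iterate, Nat.zero_add, h, hb0]
      exact Bool.false_lt_true
    have h2 : ¬ lexLe α (shift^[n] β) := fun hle => hc6 n ⟨hle, h1⟩
    exact Or.inl (lexLt_of_not_lexLe h2)
  · intro h
    have h1 : lexLt α (shift^[n] β) := by
      refine ⟨0, fun i hi => absurd hi (Nat.not_lt_zero i), ?_⟩
      rw [shift_iterate, Nat.zero_add, h, ha0]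
      exact Bool.false_lt_true
    have h2 : ¬ lexLt (shift^[n] β) β := fun hlt => hc6 n ⟨Or.inl h1, hlt⟩
    exact lexLe_of_not_lexLt h2

def KA (α β : Omega) : Set Omega := {φ | φ ∈ Fset α β ∧ lexLe φ α}
def KB (α β : Omega) : Set Omega := {φ | φ ∈ Fset α β ∧ lexLe β φ}

noncomputable def MM (α β : Omega) (x : ℝ) : ℝ :=
  sSup (insert 0 ((fun φ => proj x φ - proj x α) '' KA α β))
noncomputable def mm (α β : Omega) (x : ℝ) : ℝ :=
  sSup (insert 0 ((fun φ => proj x β - proj x φ) '' KB α β))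
noncomputable def sf (α β : Omega) (x : ℝ) : ℝ := MM α β x + mm α β x
noncomputable def gf (α β : Omega) (x : ℝ) : ℝ := proj x β - proj x α

lemma MM_bdd (α β : Omega) {x : ℝ} (hx0 : 0 ≤ x) (hx1 : x < 1) :
    BddAbove (insert 0 ((fun φ => proj x φ - proj x α) '' KA α β)) := by
  refine ⟨1, ?_⟩
  rintro v (rfl | ⟨φ, hφ, rfl⟩)
  · norm_num
  · have := proj_le_one φ hx0 hx1
    have := proj_nonneg α hx0 hx1
    simp only; linarith

lemma mm_bdd (α β : Omega) {x : ℝ} (hx0 : 0 ≤ x) (hx1 : x < 1) :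
    BddAbove (insert 0 ((fun φ => proj x β - proj x φ) '' KB α β)) := by
  refine ⟨1, ?_⟩
  rintro v (rfl | ⟨φ, hφ, rfl⟩)
  · norm_num
  · have := proj_le_one β hx0 hx1
    have := proj_nonneg φ hx0 hx1
    simp only; linarith

lemma MM_nonneg (α β : Omega) {x : ℝ} (hx0 : 0 ≤ x) (hx1 : x < 1) : 0 ≤ MM α β x :=
  le_csSup (MM_bdd α β hx0 hx1) (Set.mem_insert _ _)

lemma mm_nonneg (α β : Omega) {x : ℝ} (hx0 : 0 ≤ x) (hx1 : x < 1) : 0 ≤ mm α β x :=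
  le_csSup (mm_bdd α β hx0 hx1) (Set.mem_insert _ _)

lemma le_MM {α β φ : Omega} (hφ : φ ∈ KA α β) {x : ℝ} (hx0 : 0 ≤ x) (hx1 : x < 1) :
    proj x φ - proj x α ≤ MM α β x :=
  le_csSup (MM_bdd α β hx0 hx1) (Set.mem_insert_of_mem _ ⟨φ, hφ, rfl⟩)

lemma le_mm {α β φ : Omega} (hφ : φ ∈ KB α β) {x : ℝ} (hx0 : 0 ≤ x) (hx1 : x < 1) :
    proj x β - proj x φ ≤ mm α β x :=
  le_csSup (mm_bdd α β hx0 hx1) (Set.mem_insert_of_mem _ ⟨φ, hφ, rfl⟩)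

lemma MM_lip (α β : Omega) {c x y : ℝ} (hc0 : 0 < c) (hc1 : c < 1)
    (hx : x ∈ Set.Icc 0 c) (hy : y ∈ Set.Icc 0 c) :
    MM α β x ≤ MM α β y + 2 * Lsum c * |x - y| := by
  have hx1 : x < 1 := lt_of_le_of_lt hx.2 hc1
  have hy1 : y < 1 := lt_of_le_of_lt hy.2 hc1
  apply csSup_le (Set.insert_nonempty _ _)
  rintro v (rfl | ⟨φ, hφ, rfl⟩)
  · have h1 := MM_nonneg α β hy.1 hy1
    have h2 := Lsum_nonneg hc0 hc1
    positivity
  · have h1 := le_MM hφ hy.1 hy1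
    have h2 := proj_lip φ hc0 hc1 hx hy
    have h3 := proj_lip α hc0 hc1 hx hy
    simp only
    have e1 : proj x φ - proj x α = (proj y φ - proj y α) + ((proj x φ - proj y φ) - (proj x α - proj y α)) := by ring
    rw [e1]
    have := abs_le.mp h2
    have := abs_le.mp h3
    linarith

lemma mm_lip (α β : Omega) {c x y : ℝ} (hc0 : 0 < c) (hc1 : c < 1)
    (hx : x ∈ Set.Icc 0 c) (hy : y ∈ Set.Icc 0 c) :
    mm α β x ≤ mm α β y + 2 * Lsum c * |x - y| := by
  have hx1 : x < 1 := lt_of_le_of_lt hx.2 hc1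
  have hy1 : y < 1 := lt_of_le_of_lt hy.2 hc1
  apply csSup_le (Set.insert_nonempty _ _)
  rintro v (rfl | ⟨φ, hφ, rfl⟩)
  · have h1 := mm_nonneg α β hy.1 hy1
    have h2 := Lsum_nonneg hc0 hc1
    positivity
  · have h1 := le_mm hφ hy.1 hy1
    have h2 := proj_lip φ hc0 hc1 hx hy
    have h3 := proj_lip β hc0 hc1 hx hy
    simp only
    have e1 : proj x β - proj x φ = (proj y β - proj y φ) + ((proj x β - proj y β) - (proj x φ - proj y φ)) := by ring
    rw [e1]
    have := abs_le.mp h2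
    have := abs_le.mp h3
    linarith

lemma sf_abs_lip (α β : Omega) {c x y : ℝ} (hc0 : 0 < c) (hc1 : c < 1)
    (hx : x ∈ Set.Icc 0 c) (hy : y ∈ Set.Icc 0 c) :
    |sf α β x - sf α β y| ≤ 4 * Lsum c * |x - y| := by
  have h1 := MM_lip α β hc0 hc1 hx hy
  have h2 := MM_lip α β hc0 hc1 hy hx
  have h3 := mm_lip α β hc0 hc1 hx hy
  have h4 := mm_lip α β hc0 hc1 hy hx
  rw [abs_sub_comm y x] at h2 h4
  rw [abs_le]
  unfold sf
  constructor <;> linarith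

lemma gf_abs_lip (α β : Omega) {c x y : ℝ} (hc0 : 0 < c) (hc1 : c < 1)
    (hx : x ∈ Set.Icc 0 c) (hy : y ∈ Set.Icc 0 c) :
    |gf α β x - gf α β y| ≤ 2 * Lsum c * |x - y| := by
  have h2 := proj_lip α hc0 hc1 hx hy
  have h3 := proj_lip β hc0 hc1 hx hy
  have := abs_le.mp h2
  have := abs_le.mp h3
  rw [abs_le]
  unfold gf
  constructor <;> linarith

lemma continuousOn_of_lip {f : ℝ → ℝ} {s : Set ℝ} {L : ℝ} (hL : 0 ≤ L)
    (h : ∀ x ∈ s, ∀ y ∈ s, |f x - f y| ≤ L * |x - y|) : ContinuousOn f s := by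
  have hlip : LipschitzOnWith (Real.toNNReal L) f s := by
    rw [lipschitzOnWith_iff_dist_le_mul]
    intro x hx y hy
    rw [Real.dist_eq, Real.dist_eq]
    calc dist (f x) (f y) = |f x - f y| := Real.dist_eq _ _
      _ ≤ L * |x - y| := h x hx y hy
      _ = (Real.toNNReal L) * |x - y| := by rw [Real.coe_toNNReal L hL]
  exact hlip.continuousOn

lemma key_ineq_MM {α β : Omega} (hadm : Admissible α β) {x : ℝ} (hx0 : 0 ≤ x) (hx1 : x < 1) :
    MM α β x ≤ max 0 (x * (sf α β x - gf α β x)) := by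
  apply csSup_le (Set.insert_nonempty _ _)
  rintro v (rfl | ⟨φ, ⟨hφF, hφle⟩, rfl⟩)
  · exact le_max_left _ _
  · simp only
    rcases hφle with hlt | rfl
    · obtain ⟨j, hag, hj⟩ := hlt
      obtain ⟨hjf, hjt⟩ := (bool_lt_iff _ _).mp hj
      have hjpos : 1 ≤ j := by
        rcases Nat.eq_zero_or_pos j with rfl | h
        · rw [hadm.1] at hjt; exact absurd hjt (by simp)
        · exact h
      have hsub := proj_sub_prefix x hx0 hx1 j φ α hag
      have hA : proj x (shift^[j] φ) - proj x α ≤ MM α β x := by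
        apply le_MM _ hx0 hx1
        refine ⟨shift_mem_Fset hφF j, ?_⟩
        apply (fact_head hadm _ (shift_mem_Fset hφF j)).1
        rw [shift_iterate, Nat.zero_add]; exact hjf
      have hB : proj x β - proj x (shift^[j] α) ≤ mm α β x := by
        apply le_mm _ hx0 hx1
        refine ⟨shift_mem_Fset (alpha_mem_Fset α β) j, ?_⟩
        apply (fact_head hadm _ (shift_mem_Fset (alpha_mem_Fset α β) j)).2
        rw [shift_iterate, Nat.zero_add]; exact hjt
      set br := proj x (shift^[j] φ) - proj x (shift^[j] α) with hbr
      have hbrle : br ≤ sf α β x - gf α β x := by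
        have : br = (proj x (shift^[j] φ) - proj x α) - (proj x β - proj x α)
            + (proj x β - proj x (shift^[j] α)) := by ring
        rw [this]
        unfold sf gf
        linarith
      rcases le_or_gt br 0 with hbr0 | hbr0
      · have : proj x φ - proj x α ≤ 0 := by
          rw [hsub]
          exact mul_nonpos_of_nonneg_of_nonpos (by positivity) hbr0
        exact le_trans this (le_max_left _ _)
      · have hxj : x ^ j ≤ x := by
          calc x ^ j ≤ x ^ 1 := pow_le_pow_of_le_one hx0 hx1.le hjpos
            _ = x := pow_one x
        have : proj x φ - proj x α ≤ x * (sf α β x - gf α β x) := by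
          rw [hsub]
          calc x ^ j * br ≤ x * br := mul_le_mul_of_nonneg_right hxj hbr0.le
            _ ≤ x * (sf α β x - gf α β x) := mul_le_mul_of_nonneg_left hbrle hx0
        exact le_trans this (le_max_right _ _)
    · simp only [sub_self]
      exact le_max_left _ _

lemma key_ineq_mm {α β : Omega} (hadm : Admissible α β) {x : ℝ} (hx0 : 0 ≤ x) (hx1 : x < 1) :
    mm α β x ≤ max 0 (x * (sf α β x - gf α β x)) := by
  apply csSup_le (Set.insert_nonempty _ _)
  rintro v (rfl | ⟨φ, ⟨hφF, hφle⟩, rfl⟩)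
  · exact le_max_left _ _
  · simp only
    rcases hφle with hlt | rfl
    · obtain ⟨j, hag, hj⟩ := hlt
      obtain ⟨hjf, hjt⟩ := (bool_lt_iff _ _).mp hj
      have hjpos : 1 ≤ j := by
        rcases Nat.eq_zero_or_pos j with rfl | h
        · rw [hadm.2.2.1] at hjf; exact absurd hjf (by simp)
        · exact h
      have hsub := proj_sub_prefix x hx0 hx1 j β φ hag
      have hA : proj x (shift^[j] β) - proj x α ≤ MM α β x := by
        apply le_MM _ hx0 hx1
        refine ⟨shift_mem_Fset (beta_mem_Fset α β) j, ?_⟩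
        apply (fact_head hadm _ (shift_mem_Fset (beta_mem_Fset α β) j)).1
        rw [shift_iterate, Nat.zero_add]; exact hjf
      have hB : proj x β - proj x (shift^[j] φ) ≤ mm α β x := by
        apply le_mm _ hx0 hx1
        refine ⟨shift_mem_Fset hφF j, ?_⟩
        apply (fact_head hadm _ (shift_mem_Fset hφF j)).2
        rw [shift_iterate, Nat.zero_add]; exact hjt
      set br := proj x (shift^[j] β) - proj x (shift^[j] φ) with hbr
      have hbrle : br ≤ sf α β x - gf α β x := by
        have : br = (proj x (shift^[j] β) - proj x α) - (proj x β - proj x α)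
            + (proj x β - proj x (shift^[j] φ)) := by ring
        rw [this]
        unfold sf gf
        linarith
      rcases le_or_gt br 0 with hbr0 | hbr0
      · have : proj x β - proj x φ ≤ 0 := by
          rw [hsub]
          exact mul_nonpos_of_nonneg_of_nonpos (by positivity) hbr0
        exact le_trans this (le_max_left _ _)
      · have hxj : x ^ j ≤ x := by
          calc x ^ j ≤ x ^ 1 := pow_le_pow_of_le_one hx0 hx1.le hjpos
            _ = x := pow_one x
        have : proj x β - proj x φ ≤ x * (sf α β x - gf α β x) := by
          rw [hsub]
          calc x ^ j * br ≤ x * br := mul_le_mul_of_nonneg_right hxj hbr0.le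
            _ ≤ x * (sf α β x - gf α β x) := mul_le_mul_of_nonneg_left hbrle hx0
        exact le_trans this (le_max_right _ _)
    · simp only [sub_self]
      exact le_max_left _ _

lemma key2 {α β : Omega} (hadm : Admissible α β) {x : ℝ} (hx0 : 0 ≤ x) (hx1 : x < 1)
    (hs : 0 < sf α β x) : gf α β x ≤ (2 * x - 1) * (sf α β x - gf α β x) := by
  have h1 := key_ineq_MM hadm (x := x) hx0 hx1
  have h2 := key_ineq_mm hadm (x := x) hx0 hx1
  have hsum : sf α β x ≤ 2 * max 0 (x * (sf α β x - gf α β x)) := by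
    unfold sf at *; linarith
  rcases le_or_gt (x * (sf α β x - gf α β x)) 0 with hc | hc
  · rw [max_eq_left hc] at hsum
    linarith
  · rw [max_eq_right hc.le] at hsum
    nlinarith

lemma gf_lower {α β : Omega} (hadm : Admissible α β) {x : ℝ} (hx0 : 0 ≤ x) (hx1 : x < 1) :
    1 - 2 * x ≤ gf α β x := by
  have h1 := proj_head_true β hx0 hx1 hadm.2.2.1
  have h2 := proj_head_false α hx0 hx1 hadm.1
  unfold gf; linarith

lemma baseSet_of_gf_zero {α β : Omega} {r : ℝ} (hr : r ∈ Set.Ico (1/2 : ℝ) 1)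
    (h : gf α β r = 0) : r ∈ baseSet α β := by
  refine ⟨hr, ?_⟩
  unfold gf proj at h
  have h1 : (1 : ℝ) - r ≠ 0 := by
    have := hr.2; intro hc; apply absurd hc; intro hc2; linarith
  unfold seriesEq
  have h2 : (1 - r) * ((∑' n : ℕ, (if β n then (1:ℝ) else 0) * r ^ n)
      - (∑' n : ℕ, (if α n then (1:ℝ) else 0) * r ^ n)) = 0 := by linarith
  rcases mul_eq_zero.mp h2 with hc | hc
  · exact absurd hc h1
  · linarith

lemma gf_pos {α β : Omega} (hadm : Admissible α β) {b : ℝ} (hb : IsLeast (baseSet α β) b)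
    {x : ℝ} (hx : 1/2 ≤ x) (hxb : x < b) : 0 < gf α β x := by
  have hb1 : b < 1 := hb.1.1.2
  have hb0 : (0:ℝ) < b := lt_of_lt_of_le (by norm_num) hb.1.1.1
  have hx1 : x < 1 := lt_trans hxb hb1
  have hx0 : (0:ℝ) ≤ x := le_trans (by norm_num) hx
  by_contra hc
  push_neg at hc
  rcases eq_or_lt_of_le hc with heq | hlt
  · have : x ∈ baseSet α β := baseSet_of_gf_zero ⟨hx, hx1⟩ heq
    exact absurd (hb.2 this) (by linarith)
  · -- gf x < 0 : IVT gives a zero in [1/2, x]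
    have hcont : ContinuousOn (gf α β) (Set.Icc (1/2) x) := by
      apply continuousOn_of_lip (L := 2 * Lsum b)
      · have := Lsum_nonneg hb0 hb1; linarith
      · intro u hu v hv
        exact gf_abs_lip α β hb0 hb1
          ⟨by linarith [hu.1], by linarith [hu.2, hxb.le]⟩
          ⟨by linarith [hv.1], by linarith [hv.2, hxb.le]⟩
    have hIVT := intermediate_value_Icc' (le_trans (by norm_num) hx : (1/2:ℝ) ≤ x) hcont
    have h0mem : (0:ℝ) ∈ Set.Icc (gf α β x) (gf α β (1/2)) := by
      constructor
      · exact hlt.le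
      · have := gf_lower hadm (x := (1/2:ℝ)) (by norm_num) (by norm_num)
        linarith
    obtain ⟨r, hrI, hr0⟩ := hIVT h0mem
    have : r ∈ baseSet α β := baseSet_of_gf_zero ⟨hrI.1, by linarith [hrI.2]⟩ hr0
    have := hb.2 this
    linarith [hrI.2]

lemma sf_nonneg (α β : Omega) {x : ℝ} (hx0 : 0 ≤ x) (hx1 : x < 1) : 0 ≤ sf α β x := by
  have := MM_nonneg α β hx0 hx1
  have := mm_nonneg α β hx0 hx1
  unfold sf; linarith

lemma sf_pos_imp {α β : Omega} (hadm : Admissible α β) {b : ℝ} (hb : IsLeast (baseSet α β) b)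
    {x : ℝ} (hx : 1/2 ≤ x) (hxb : x < b) (hs : 0 < sf α β x) :
    gf α β x < sf α β x := by
  have hx1 : x < 1 := lt_trans hxb hb.1.1.2
  have hx0 : (0:ℝ) ≤ x := by linarith
  have hkey := key2 hadm hx0 hx1 hs
  have hg := gf_pos hadm hb hx hxb
  by_contra hcon
  push_neg at hcon
  have h1 : sf α β x - gf α β x ≤ 0 := by linarith
  have h2 : (0:ℝ) ≤ 2 * x - 1 := by linarith
  nlinarith

lemma sf_vanish {α β : Omega} (hadm : Admissible α β) {b : ℝ} (hb : IsLeast (baseSet α β) b)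
    (hbhalf : 1/2 < b) {x : ℝ} (hx : 1/2 ≤ x) (hxb : x < b) : sf α β x = 0 := by
  have hb1 : b < 1 := hb.1.1.2
  have hb0 : (0:ℝ) < b := by linarith
  have hx1 : x < 1 := lt_trans hxb hb1
  have hx0 : (0:ℝ) ≤ x := by linarith
  by_contra hc
  have hs : 0 < sf α β x := lt_of_le_of_ne (sf_nonneg α β hx0 hx1) (Ne.symm hc)
  -- F := gf - sf ; F(1/2) > 0, F(x) < 0, find zero r
  set F : ℝ → ℝ := fun t => gf α β t - sf α β t with hF
  have hFhalf : 0 < F (1/2) := by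
    have hg := gf_pos hadm hb (x := (1/2:ℝ)) le_rfl hbhalf
    have hs2 : sf α β (1/2) = 0 := by
      by_contra hc2
      have hspos : 0 < sf α β (1/2) := lt_of_le_of_ne (sf_nonneg α β (by norm_num) (by norm_num)) (Ne.symm hc2)
      have := key2 hadm (x := (1/2:ℝ)) (by norm_num) (by norm_num) hspos
      norm_num at this
      linarith
    simp only [hF]; rw [hs2]; linarith
  have hFx : F x < 0 := by
    have := sf_pos_imp hadm hb hx hxb hs
    simp only [hF]; linarith
  have hcont : ContinuousOn F (Set.Icc (1/2) x) := by
    apply continuousOn_of_lip (L := 6 * Lsum b)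
    · have := Lsum_nonneg hb0 hb1; linarith
    · intro u hu v hv
      have hum : u ∈ Set.Icc (0:ℝ) b := ⟨by linarith [hu.1], by linarith [hu.2, hxb.le]⟩
      have hvm : v ∈ Set.Icc (0:ℝ) b := ⟨by linarith [hv.1], by linarith [hv.2, hxb.le]⟩
      have h1 := gf_abs_lip α β hb0 hb1 hum hvm
      have h2 := sf_abs_lip α β hb0 hb1 hum hvm
      simp only [hF]
      have e : gf α β u - sf α β u - (gf α β v - sf α β v)
          = (gf α β u - gf α β v) - (sf α β u - sf α β v) := by ring
      rw [e]
      calc |(gf α β u - gf α β v) - (sf α β u - sf α β v)|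
          ≤ |gf α β u - gf α β v| + |sf α β u - sf α β v| := abs_sub _ _
        _ ≤ 2 * Lsum b * |u - v| + 4 * Lsum b * |u - v| := add_le_add h1 h2
        _ = 6 * Lsum b * |u - v| := by ring
  have hIVT := intermediate_value_Icc' (by linarith : (1/2:ℝ) ≤ x) hcont
  have h0mem : (0:ℝ) ∈ Set.Icc (F x) (F (1/2)) := ⟨hFx.le, hFhalf.le⟩
  obtain ⟨r, hrI, hr0⟩ := hIVT h0mem
  have hrb : r < b := by linarith [hrI.2]
  have hr1 : r < 1 := by linarith
  have hr0' : (0:ℝ) ≤ r := by linarith [hrI.1]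
  have hgr : 0 < gf α β r := gf_pos hadm hb hrI.1 hrb
  have hsr : sf α β r = gf α β r := by simp only [hF] at hr0; linarith
  have hspos : 0 < sf α β r := by rw [hsr]; exact hgr
  have := key2 hadm hr0' hr1 hspos
  rw [hsr] at this
  simp at this
  linarith

lemma sf_b_zero {α β : Omega} (hadm : Admissible α β) {b : ℝ} (hb : IsLeast (baseSet α β) b)
    (hbhalf : 1/2 < b) : sf α β b = 0 := by
  have hb1 : b < 1 := hb.1.1.2
  have hb0 : (0:ℝ) < b := by linarith
  have hbI : b ∈ Set.Icc (0:ℝ) b := ⟨hb0.le, le_rfl⟩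
  have hL := Lsum_nonneg hb0 hb1
  by_contra hc
  have hs : 0 < sf α β b := lt_of_le_of_ne (sf_nonneg α β hb0.le hb1) (Ne.symm hc)
  set L := Lsum b with hLdef
  set t := max (1/2) (b - sf α β b / (4 * L + 1)) with ht
  have hden : (0:ℝ) < 4 * L + 1 := by linarith
  have htlt : t < b := by
    apply max_lt hbhalf
    have : 0 < sf α β b / (4 * L + 1) := div_pos hs hden
    linarith
  have hthalf : 1/2 ≤ t := le_max_left _ _
  have htI : t ∈ Set.Icc (0:ℝ) b := ⟨by linarith, htlt.le⟩
  have hst : sf α β t = 0 := sf_vanish hadm hb hbhalf hthalf htlt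
  have hlip := sf_abs_lip α β hb0 hb1 hbI htI
  rw [hst] at hlip
  have habs : |b - t| = b - t := abs_of_nonneg (by linarith)
  rw [habs, sub_zero] at hlip
  have hbt : b - t ≤ sf α β b / (4 * L + 1) := by
    have := le_max_right (1/2 : ℝ) (b - sf α β b / (4 * L + 1))
    simp only [ht] at *
    linarith [this]
  have h1 : |sf α β b| ≤ 4 * L * (sf α β b / (4 * L + 1)) := by
    calc |sf α β b| ≤ 4 * L * (b - t) := hlip
      _ ≤ 4 * L * (sf α β b / (4 * L + 1)) := by
          apply mul_le_mul_of_nonneg_left hbt (by linarith)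
  rw [abs_of_pos hs] at h1
  have h2 : 4 * L * (sf α β b / (4 * L + 1)) < sf α β b := by
    rw [div_eq_inv_mul]
    have : 4 * L < 4 * L + 1 := by linarith
    calc 4 * L * ((4 * L + 1)⁻¹ * sf α β b) = (4 * L) / (4 * L + 1) * sf α β b := by ring
      _ < 1 * sf α β b := by
          apply mul_lt_mul_of_pos_right _ hs
          rw [div_lt_one hden]; linarith
      _ = sf α β b := one_mul _
  linarith

lemma mono_half {σ τ : Omega} (h : lexLe σ τ) : proj (1/2) σ ≤ proj (1/2) τ := by
  rcases h with ⟨k, hag, hk⟩ | rfl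
  · obtain ⟨hkf, hkt⟩ := (bool_lt_iff _ _).mp hk
    have hsub := proj_sub_prefix (1/2 : ℝ) (by norm_num) (by norm_num) k τ σ
      (fun i hi => (hag i hi).symm)
    have h1 : proj (1/2 : ℝ) (shift^[k] τ) ≥ 1/2 := by
      have := proj_head_true (shift^[k] τ) (x := (1/2:ℝ)) (by norm_num) (by norm_num)
        (by rw [shift_iterate, Nat.zero_add]; exact hkt)
      linarith
    have h2 : proj (1/2 : ℝ) (shift^[k] σ) ≤ 1/2 := by
      exact proj_head_false (shift^[k] σ) (by norm_num) (by norm_num)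
        (by rw [shift_iterate, Nat.zero_add]; exact hkf)
    have h3 : (0:ℝ) ≤ ((1:ℝ)/2) ^ k := by positivity
    nlinarith
  · exact le_rfl

lemma claimC {α β : Omega} (hadm : Admissible α β) {b : ℝ} (hb : IsLeast (baseSet α β) b) :
    (∀ φ ∈ KA α β, proj b φ ≤ proj b α) ∧ (∀ φ ∈ KB α β, proj b β ≤ proj b φ) := by
  have hbhalf : (1/2 : ℝ) ≤ b := hb.1.1.1
  have hb1 : b < 1 := hb.1.1.2
  have hb0 : (0:ℝ) < b := by linarith
  rcases eq_or_lt_of_le hbhalf with heq | hlt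
  · subst heq
    constructor
    · rintro φ ⟨-, hle⟩; exact mono_half hle
    · rintro φ ⟨-, hle⟩; exact mono_half hle
  · have hsz := sf_b_zero hadm hb hlt
    have hM0 := MM_nonneg α β hb0.le hb1
    have hm0 := mm_nonneg α β hb0.le hb1
    have hM : MM α β b = 0 := by unfold sf at hsz; linarith
    have hm : mm α β b = 0 := by unfold sf at hsz; linarith
    constructor
    · intro φ hφ
      have := le_MM hφ hb0.le hb1
      rw [hM] at this; linarith
    · intro φ hφ
      have := le_mm hφ hb0.le hb1
      rw [hm] at this; linarith

lemma proj_b_eq {α β : Omega} {b : ℝ} (hb : IsLeast (baseSet α β) b) :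
    proj b α = proj b β := by
  have := hb.1.2
  unfold seriesEq at this
  unfold proj
  rw [this]

lemma corr_alpha_false {α β : Omega} (hadm : Admissible α β) {b : ℝ}
    (hb : IsLeast (baseSet α β) b) {n : ℕ} (h : α n = false) :
    proj b (shift^[n] α) ≤ proj b α := by
  apply (claimC hadm hb).1
  refine ⟨shift_mem_Fset (alpha_mem_Fset α β) n, ?_⟩
  apply (fact_head hadm _ (shift_mem_Fset (alpha_mem_Fset α β) n)).1
  rw [shift_iterate, Nat.zero_add]; exact h

lemma corr_alpha_true {α β : Omega} (hadm : Admissible α β) {b : ℝ}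
    (hb : IsLeast (baseSet α β) b) {n : ℕ} (h : α n = true) :
    proj b α ≤ proj b (shift^[n] α) := by
  rw [proj_b_eq hb]
  apply (claimC hadm hb).2
  refine ⟨shift_mem_Fset (alpha_mem_Fset α β) n, ?_⟩
  apply (fact_head hadm _ (shift_mem_Fset (alpha_mem_Fset α β) n)).2
  rw [shift_iterate, Nat.zero_add]; exact h

lemma corr_beta_false {α β : Omega} (hadm : Admissible α β) {b : ℝ}
    (hb : IsLeast (baseSet α β) b) {n : ℕ} (h : β n = false) :
    proj b (shift^[n] β) ≤ proj b α := by
  apply (claimC hadm hb).1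
  refine ⟨shift_mem_Fset (beta_mem_Fset α β) n, ?_⟩
  apply (fact_head hadm _ (shift_mem_Fset (beta_mem_Fset α β) n)).1
  rw [shift_iterate, Nat.zero_add]; exact h

lemma corr_beta_true {α β : Omega} (hadm : Admissible α β) {b : ℝ}
    (hb : IsLeast (baseSet α β) b) {n : ℕ} (h : β n = true) :
    proj b α ≤ proj b (shift^[n] β) := by
  rw [proj_b_eq hb]
  apply (claimC hadm hb).2
  refine ⟨shift_mem_Fset (beta_mem_Fset α β) n, ?_⟩
  apply (fact_head hadm _ (shift_mem_Fset (beta_mem_Fset α β) n)).2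
  rw [shift_iterate, Nat.zero_add]; exact h

section Dyn

variable {b B p : ℝ}

structure Params (b B p : ℝ) : Prop where
  hbhalf : 1/2 ≤ b
  hb1 : b < 1
  hB : B = 1 / b
  hp1 : 1 - b ≤ p
  hp2 : p ≤ b

namespace Params

lemma hb0 (P : Params b B p) : 0 < b := lt_of_lt_of_le (by norm_num) P.hbhalf
lemma hB0 (P : Params b B p) : 0 < B := by rw [P.hB]; have := P.hb0; positivity
lemma hB1 (P : Params b B p) : 1 < B := by
  rw [P.hB, lt_div_iff₀ P.hb0]
  linarith [P.hb1]
lemma hBb (P : Params b B p) : B * b = 1 := by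
  have := P.hb0
  rw [P.hB]; field_simp
lemma hp0 (P : Params b B p) : 0 ≤ p := by linarith [P.hp1, P.hb1]

lemma fMinus_maps (P : Params b B p) (z : ℝ) (hz : 0 ≤ z ∧ z ≤ 1) :
    0 ≤ fMinus B p z ∧ fMinus B p z ≤ 1 := by
  obtain ⟨hz0, hz1⟩ := hz
  have hB0 := P.hB0
  unfold fMinus
  by_cases h : z ≤ p
  · rw [if_pos h]
    constructor
    · positivity
    · calc B * z ≤ B * p := mul_le_mul_of_nonneg_left h hB0.le
        _ ≤ B * b := mul_le_mul_of_nonneg_left P.hp2 hB0.le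
        _ = 1 := P.hBb
  · rw [if_neg h]
    push_neg at h
    constructor
    · have h1 : B * (1 - b) ≤ B * p := mul_le_mul_of_nonneg_left P.hp1 hB0.le
      have h2 : B * (1 - b) = B - 1 := by rw [mul_sub, P.hBb, mul_one]
      have h3 : B * p ≤ B * z := mul_le_mul_of_nonneg_left h.le hB0.le
      linarith
    · have : B * z ≤ B * 1 := mul_le_mul_of_nonneg_left hz1 hB0.le
      linarith

lemma fPlus_maps (P : Params b B p) (z : ℝ) (hz : 0 ≤ z ∧ z ≤ 1) :
    0 ≤ fPlus B p z ∧ fPlus B p z ≤ 1 := by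
  obtain ⟨hz0, hz1⟩ := hz
  have hB0 := P.hB0
  unfold fPlus
  by_cases h : z < p
  · rw [if_pos h]
    constructor
    · positivity
    · calc B * z ≤ B * p := mul_le_mul_of_nonneg_left h.le hB0.le
        _ ≤ B * b := mul_le_mul_of_nonneg_left P.hp2 hB0.le
        _ = 1 := P.hBb
  · rw [if_neg h]
    push_neg at h
    constructor
    · have h1 : B * (1 - b) ≤ B * p := mul_le_mul_of_nonneg_left P.hp1 hB0.le
      have h2 : B * (1 - b) = B - 1 := by rw [mul_sub, P.hBb, mul_one]
      have h3 : B * p ≤ B * z := mul_le_mul_of_nonneg_left h hB0.le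
      linarith
    · have : B * z ≤ B * 1 := mul_le_mul_of_nonneg_left hz1 hB0.le
      linarith

lemma orbit_minus_mem (P : Params b B p) {y : ℝ} (hy : 0 ≤ y ∧ y ≤ 1) (n : ℕ) :
    0 ≤ (fMinus B p)^[n] y ∧ (fMinus B p)^[n] y ≤ 1 := by
  induction n with
  | zero => exact hy
  | succ n ih =>
    rw [Function.iterate_succ_apply']
    exact P.fMinus_maps _ ih

lemma orbit_plus_mem (P : Params b B p) {y : ℝ} (hy : 0 ≤ y ∧ y ≤ 1) (n : ℕ) :
    0 ≤ (fPlus B p)^[n] y ∧ (fPlus B p)^[n] y ≤ 1 := by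
  induction n with
  | zero => exact hy
  | succ n ih =>
    rw [Function.iterate_succ_apply']
    exact P.fPlus_maps _ ih

end Params

lemma itin_minus_rec (B p y : ℝ) (n : ℕ) :
    (fMinus B p)^[n+1] y
      = B * ((fMinus B p)^[n] y) - (B - 1) * (if itinMinus B p y n then (1:ℝ) else 0) := by
  rw [Function.iterate_succ_apply']
  set z := (fMinus B p)^[n] y with hz
  have hd : itinMinus B p y n = if p < z then true else false := rfl
  rw [hd]
  show (if z ≤ p then B * z else B * z + 1 - B) = _
  by_cases h : p < z
  · have h' : ¬ z ≤ p := not_le.mpr h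
    simp only [h', if_false, h, if_true]
    ring
  · have h' : z ≤ p := not_lt.mp h
    simp only [h', if_true, h, if_false]
    simp

lemma itin_plus_rec (B p y : ℝ) (n : ℕ) :
    (fPlus B p)^[n+1] y
      = B * ((fPlus B p)^[n] y) - (B - 1) * (if itinPlus B p y n then (1:ℝ) else 0) := by
  rw [Function.iterate_succ_apply']
  set z := (fPlus B p)^[n] y with hz
  have hd : itinPlus B p y n = if p ≤ z then true else false := rfl
  rw [hd]
  show (if z < p then B * z else B * z + 1 - B) = _
  by_cases h : p ≤ z
  · have h' : ¬ z < p := not_lt.mpr h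
    simp only [h', if_false, h, if_true]
    ring
  · have h' : z < p := not_le.mp h
    simp only [h', if_true, h, if_false]
    simp

lemma shift_itin_minus (B p y : ℝ) (n : ℕ) :
    shift^[n] (itinMinus B p y) = itinMinus B p ((fMinus B p)^[n] y) := by
  funext k
  rw [shift_iterate]
  show (if p < (fMinus B p)^[k+n] y then true else false) = _
  rw [Function.iterate_add_apply]
  rfl

lemma shift_itin_plus (B p y : ℝ) (n : ℕ) :
    shift^[n] (itinPlus B p y) = itinPlus B p ((fPlus B p)^[n] y) := by
  funext k
  rw [shift_iterate]
  show (if p ≤ (fPlus B p)^[k+n] y then true else false) = _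
  rw [Function.iterate_add_apply]
  rfl

lemma itin_minus_true_iff (B p y : ℝ) (n : ℕ) :
    itinMinus B p y n = true ↔ p < (fMinus B p)^[n] y := by
  unfold itinMinus
  by_cases h : p < (fMinus B p)^[n] y <;> simp [h]

lemma itin_minus_false_iff (B p y : ℝ) (n : ℕ) :
    itinMinus B p y n = false ↔ (fMinus B p)^[n] y ≤ p := by
  unfold itinMinus
  by_cases h : p < (fMinus B p)^[n] y <;> simp [h]
  exact not_lt.mp h

lemma itin_plus_true_iff (B p y : ℝ) (n : ℕ) :
    itinPlus B p y n = true ↔ p ≤ (fPlus B p)^[n] y := by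
  unfold itinPlus
  by_cases h : p ≤ (fPlus B p)^[n] y <;> simp [h]

lemma itin_plus_false_iff (B p y : ℝ) (n : ℕ) :
    itinPlus B p y n = false ↔ (fPlus B p)^[n] y < p := by
  unfold itinPlus
  by_cases h : p ≤ (fPlus B p)^[n] y <;> simp [h]
  exact not_le.mp h

/-- Master comparison lemma for orbit/digit systems. -/
lemma lex_of_orbits {B : ℝ} (hB : 1 < B) (z w : ℕ → ℝ) (σ τ : Omega)
    (hz : ∀ n, z (n+1) = B * z n - (B-1) * (if σ n then (1:ℝ) else 0))
    (hw : ∀ n, w (n+1) = B * w n - (B-1) * (if τ n then (1:ℝ) else 0))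
    (hzb : ∀ n, 0 ≤ z n ∧ z n ≤ 1) (hwb : ∀ n, 0 ≤ w n ∧ w n ≤ 1)
    (hmis : ∀ n, σ n ≠ τ n → z n < w n → σ n = false ∧ τ n = true)
    (h0 : z 0 < w 0) : lexLt σ τ := by
  have hgap : ∀ n, (∀ i, i < n → σ i = τ i) → w n - z n = B ^ n * (w 0 - z 0) := by
    intro n
    induction n with
    | zero => intro _; simp
    | succ n ih =>
      intro hag
      have h1 := ih (fun i hi => hag i (by omega))
      rw [hz n, hw n, hag n (by omega)]
      have : B * w n - (B-1) * (if τ n then (1:ℝ) else 0)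
          - (B * z n - (B-1) * (if τ n then (1:ℝ) else 0)) = B * (w n - z n) := by ring
      rw [this, h1]
      ring
  have hex : ∃ n, σ n ≠ τ n := by
    by_contra hc
    push_neg at hc
    obtain ⟨n, hn⟩ := pow_unbounded_of_one_lt ((w 0 - z 0)⁻¹) hB
    have hgapn := hgap n (fun i _ => hc i)
    have h1 : w n - z n ≤ 1 := by linarith [(hwb n).2, (hzb n).1]
    have h2 : (w 0 - z 0)⁻¹ * (w 0 - z 0) < B ^ n * (w 0 - z 0) :=
      mul_lt_mul_of_pos_right hn (by linarith)
    rw [inv_mul_cancel₀ (by linarith : w 0 - z 0 ≠ 0)] at h2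
    linarith
  classical
  let k := Nat.find hex
  have hk : σ k ≠ τ k := Nat.find_spec hex
  have hag : ∀ i, i < k → σ i = τ i := fun i hi => by
    by_contra hci
    have : k ≤ i := Nat.find_le hci
    omega
  have hgt : z k < w k := by
    have hgk := hgap k hag
    have hBk : (0:ℝ) < B ^ k := pow_pos (by linarith) k
    have hp : (0:ℝ) < B ^ k * (w 0 - z 0) := mul_pos hBk (by linarith)
    linarith
  obtain ⟨h1, h2⟩ := hmis k hk hgt
  exact ⟨k, hag, by rw [h1, h2]; exact Bool.false_lt_true⟩

end Dyn

section Main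

variable {α β : Omega} {b B p : ℝ}

-- monotonicity of itineraries
lemma itin_minus_lt (P : Params b B p) {u v : ℝ} (hu : 0 ≤ u ∧ u ≤ 1) (hv : 0 ≤ v ∧ v ≤ 1)
    (huv : u < v) : lexLt (itinMinus B p u) (itinMinus B p v) := by
  apply lex_of_orbits P.hB1 (fun n => (fMinus B p)^[n] u) (fun n => (fMinus B p)^[n] v) _ _
    (itin_minus_rec B p u) (itin_minus_rec B p v) (P.orbit_minus_mem hu) (P.orbit_minus_mem hv)
    _ huv
  intro n hne hlt
  by_cases hσ : itinMinus B p u n = true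
  · exfalso
    have h1 := (itin_minus_true_iff B p u n).mp hσ
    have h2 : itinMinus B p v n = true := (itin_minus_true_iff B p v n).mpr (by linarith)
    exact hne (hσ.trans h2.symm)
  · have hσf : itinMinus B p u n = false := by
      cases h : itinMinus B p u n
      · rfl
      · exact absurd h hσ
    refine ⟨hσf, ?_⟩
    cases h : itinMinus B p v n
    · exact absurd (hσf.trans h.symm) hne
    · rfl

lemma itin_plus_lt (P : Params b B p) {u v : ℝ} (hu : 0 ≤ u ∧ u ≤ 1) (hv : 0 ≤ v ∧ v ≤ 1)
    (huv : u < v) : lexLt (itinPlus B p u) (itinPlus B p v) := by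
  apply lex_of_orbits P.hB1 (fun n => (fPlus B p)^[n] u) (fun n => (fPlus B p)^[n] v) _ _
    (itin_plus_rec B p u) (itin_plus_rec B p v) (P.orbit_plus_mem hu) (P.orbit_plus_mem hv)
    _ huv
  intro n hne hlt
  by_cases hσ : itinPlus B p u n = true
  · exfalso
    have h1 := (itin_plus_true_iff B p u n).mp hσ
    have h2 : itinPlus B p v n = true := (itin_plus_true_iff B p v n).mpr (by linarith)
    exact hne (hσ.trans h2.symm)
  · have hσf : itinPlus B p u n = false := by
      cases h : itinPlus B p u n
      · rfl
      · exact absurd h hσ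
    refine ⟨hσf, ?_⟩
    cases h : itinPlus B p v n
    · exact absurd (hσf.trans h.symm) hne
    · rfl

lemma itin_plus_lt_minus (P : Params b B p) {u v : ℝ} (hu : 0 ≤ u ∧ u ≤ 1) (hv : 0 ≤ v ∧ v ≤ 1)
    (huv : u < v) : lexLt (itinPlus B p u) (itinMinus B p v) := by
  apply lex_of_orbits P.hB1 (fun n => (fPlus B p)^[n] u) (fun n => (fMinus B p)^[n] v) _ _
    (itin_plus_rec B p u) (itin_minus_rec B p v) (P.orbit_plus_mem hu) (P.orbit_minus_mem hv)
    _ huv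
  intro n hne hlt
  by_cases hσ : itinPlus B p u n = true
  · exfalso
    have h1 := (itin_plus_true_iff B p u n).mp hσ
    have h2 : itinMinus B p v n = true := (itin_minus_true_iff B p v n).mpr (by linarith)
    exact hne (hσ.trans h2.symm)
  · have hσf : itinPlus B p u n = false := by
      cases h : itinPlus B p u n
      · rfl
      · exact absurd h hσ
    refine ⟨hσf, ?_⟩
    cases h : itinMinus B p v n
    · exact absurd (hσf.trans h.symm) hne
    · rfl

lemma itin_minus_le (P : Params b B p) {u v : ℝ} (hu : 0 ≤ u ∧ u ≤ 1) (hv : 0 ≤ v ∧ v ≤ 1)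
    (huv : u ≤ v) : lexLe (itinMinus B p u) (itinMinus B p v) := by
  rcases eq_or_lt_of_le huv with rfl | h
  · exact lexLe_refl _
  · exact Or.inl (itin_minus_lt P hu hv h)

lemma itin_plus_le (P : Params b B p) {u v : ℝ} (hu : 0 ≤ u ∧ u ≤ 1) (hv : 0 ≤ v ∧ v ≤ 1)
    (huv : u ≤ v) : lexLe (itinPlus B p u) (itinPlus B p v) := by
  rcases eq_or_lt_of_le huv with rfl | h
  · exact lexLe_refl _
  · exact Or.inl (itin_plus_lt P hu hv h)

-- recursion for values of shifts
lemma proj_shift_rec (γ : Omega) (P : Params b B p) (n : ℕ) :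
    proj b (shift^[n+1] γ) = B * proj b (shift^[n] γ) - (B - 1) * (if γ n then (1:ℝ) else 0) := by
  have hb0 := P.hb0
  have hb1 := P.hb1
  have h5 := proj_shift_eq (shift^[n] γ) hb0.le hb1
  rw [← Function.iterate_succ_apply' shift n γ] at h5
  have hd : (shift^[n] γ) 0 = γ n := by rw [shift_iterate, Nat.zero_add]
  rw [hd] at h5
  have hbB : b * B = 1 := by rw [mul_comm]; exact P.hBb
  have hcancel : b * (B * proj b (shift^[n] γ) - (B - 1) * (if γ n then (1:ℝ) else 0))
      = b * proj b (shift^[n+1] γ) := by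
    have : b * (B * proj b (shift^[n] γ) - (B - 1) * (if γ n then (1:ℝ) else 0))
        = (b * B) * proj b (shift^[n] γ) - (b * B - b) * (if γ n then (1:ℝ) else 0) := by ring
    rw [this, hbB]
    linarith [h5]
  have := mul_left_cancel₀ (ne_of_gt hb0) hcancel
  linarith

/-- L1 : the itinerary of `p` under `fMinus` is lexicographically at most `α`. -/
lemma L1 (hadm : Admissible α β) (hb : IsLeast (baseSet α β) b)
    (P : Params b B p) (hp : p = proj b α) : lexLe (itinMinus B p p) α := by
  apply lexLe_of_not_lexLt
  rintro ⟨k, hag, hk⟩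
  obtain ⟨hkf, hkt⟩ := (bool_lt_iff _ _).mp hk
  -- z i = orbit of p, w i = proj of shifts of α; equal up to k
  have hple : (0:ℝ) ≤ p ∧ p ≤ 1 := ⟨P.hp0, le_trans P.hp2 P.hb1.le⟩
  have heqzw : ∀ i, i ≤ k → (fMinus B p)^[i] p = proj b (shift^[i] α) := by
    intro i
    induction i with
    | zero =>
      intro _
      simp only [Function.iterate_zero, id_eq]
      rw [hp]
    | succ n ih =>
      intro hn
      have hnk : n < k := by omega
      have h1 := ih (by omega)
      rw [itin_minus_rec B p p n, proj_shift_rec α P n, h1, hag n hnk]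
  have hzk := heqzw k le_rfl
  have h2 : p < (fMinus B p)^[k] p := (itin_minus_true_iff B p p k).mp hkt
  have h3 : proj b (shift^[k] α) ≤ proj b α := corr_alpha_false hadm hb hkf
  rw [hzk] at h2
  rw [← hp] at h3
  linarith

/-- L2 : the itinerary of `p` under `fPlus` is lexicographically at least `β`. -/
lemma L2 (hadm : Admissible α β) (hb : IsLeast (baseSet α β) b)
    (P : Params b B p) (hp : p = proj b α) : lexLe β (itinPlus B p p) := by
  apply lexLe_of_not_lexLt
  rintro ⟨k, hag, hk⟩
  obtain ⟨hkf, hkt⟩ := (bool_lt_iff _ _).mp hk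
  have heqzw : ∀ i, i ≤ k → (fPlus B p)^[i] p = proj b (shift^[i] β) := by
    intro i
    induction i with
    | zero =>
      intro _
      simp only [Function.iterate_zero, id_eq]
      rw [hp, proj_b_eq hb]
    | succ n ih =>
      intro hn
      have hnk : n < k := by omega
      have h1 := ih (by omega)
      rw [itin_plus_rec B p p n, proj_shift_rec β P n, h1, ← hag n hnk]
  have hzk := heqzw k le_rfl
  have h2 : (fPlus B p)^[k] p < p := (itin_plus_false_iff B p p k).mp hkf
  have h3 : proj b α ≤ proj b (shift^[k] β) := corr_beta_true hadm hb hkt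
  rw [hzk] at h2
  rw [← hp] at h3
  linarith

-- membership lemmas
lemma itin_minus_mem (hadm : Admissible α β) (hb : IsLeast (baseSet α β) b)
    (P : Params b B p) (hp : p = proj b α) {y : ℝ} (hy0 : 0 ≤ y) (hyp : y < p) :
    (∀ n : ℕ, ¬ (lexLt α (shift^[n] (itinMinus B p y)) ∧ lexLe (shift^[n] (itinMinus B p y)) β))
    ∧ lexLe (fun n => match n with | 0 => false | Nat.succ m => itinMinus B p y m) α := by
  have hy1 : y ≤ 1 := by linarith [P.hp2, P.hb1]
  have hyI : 0 ≤ y ∧ y ≤ 1 := ⟨hy0, hy1⟩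
  have hpI : 0 ≤ p ∧ p ≤ 1 := ⟨P.hp0, le_trans P.hp2 P.hb1.le⟩
  have hL1 := L1 hadm hb P hp
  have hL2 := L2 hadm hb P hp
  constructor
  · intro n ⟨h1, h2⟩
    rw [shift_itin_minus] at h1 h2
    set z := (fMinus B p)^[n] y with hzdef
    have hzI := P.orbit_minus_mem hyI n
    rcases le_or_gt z p with hzp | hpz
    · have hmono := itin_minus_le P hzI hpI hzp
      have : lexLe (itinMinus B p z) α := lexLe_trans hmono hL1
      exact not_lexLt_of_lexLe this h1
    · have hmix := itin_plus_lt_minus P hpI hzI hpz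
      have : lexLt β (itinMinus B p z) := lexLt_of_lexLe_of_lexLt hL2 hmix
      exact not_lexLe_of_lexLt this h2
  · have hby : b * y ≤ p := by
      have h1 : b * y ≤ 1 * y := mul_le_mul_of_nonneg_right P.hb1.le hy0
      rw [one_mul] at h1
      linarith
    have hbyI : 0 ≤ b * y ∧ b * y ≤ 1 := ⟨mul_nonneg P.hb0.le hy0, by linarith [hpI.2]⟩
    have hcons : (fun n => match n with | 0 => false | Nat.succ m => itinMinus B p y m)
        = itinMinus B p (b * y) := by
      funext n
      cases n with
      | zero =>
        show false = itinMinus B p (b * y) 0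
        symm
        rw [itin_minus_false_iff]
        simpa using hby
      | succ m =>
        show itinMinus B p y m = itinMinus B p (b * y) (m + 1)
        have hstep : (fMinus B p)^[m+1] (b * y) = (fMinus B p)^[m] y := by
          rw [Function.iterate_succ_apply]
          congr 1
          unfold fMinus
          rw [if_pos hby]
          have : B * (b * y) = (B * b) * y := by ring
          rw [this, P.hBb, one_mul]
        unfold itinMinus
        rw [hstep]
    rw [hcons]
    exact lexLe_trans (itin_minus_le P hbyI hpI hby) hL1

lemma itin_plus_mem (hadm : Admissible α β) (hb : IsLeast (baseSet α β) b)
    (P : Params b B p) (hp : p = proj b α) {y : ℝ} (hy0 : 0 ≤ y) (hyp : y < p) :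
    (∀ n : ℕ, ¬ (lexLe α (shift^[n] (itinPlus B p y)) ∧ lexLt (shift^[n] (itinPlus B p y)) β))
    ∧ lexLt (fun n => match n with | 0 => false | Nat.succ m => itinPlus B p y m) α := by
  have hy1 : y ≤ 1 := by linarith [P.hp2, P.hb1]
  have hyI : 0 ≤ y ∧ y ≤ 1 := ⟨hy0, hy1⟩
  have hpI : 0 ≤ p ∧ p ≤ 1 := ⟨P.hp0, le_trans P.hp2 P.hb1.le⟩
  have hL1 := L1 hadm hb P hp
  have hL2 := L2 hadm hb P hp
  constructor
  · intro n ⟨h1, h2⟩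
    rw [shift_itin_plus] at h1 h2
    set z := (fPlus B p)^[n] y with hzdef
    have hzI := P.orbit_plus_mem hyI n
    rcases lt_or_ge z p with hzp | hpz
    · have hmix := itin_plus_lt_minus P hzI hpI hzp
      have : lexLt (itinPlus B p z) α := lexLt_of_lexLt_of_lexLe hmix hL1
      exact not_lexLt_of_lexLe h1 this
    · have hmono := itin_plus_le P hpI hzI hpz
      have : lexLe β (itinPlus B p z) := lexLe_trans hL2 hmono
      exact not_lexLt_of_lexLe this h2
  · have hby : b * y < p := by
      have h1 : b * y ≤ 1 * y := mul_le_mul_of_nonneg_right P.hb1.le hy0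
      rw [one_mul] at h1
      linarith
    have hbyI : 0 ≤ b * y ∧ b * y ≤ 1 := ⟨mul_nonneg P.hb0.le hy0, by linarith [hpI.2]⟩
    have hcons : (fun n => match n with | 0 => false | Nat.succ m => itinPlus B p y m)
        = itinPlus B p (b * y) := by
      funext n
      cases n with
      | zero =>
        show false = itinPlus B p (b * y) 0
        symm
        rw [itin_plus_false_iff]
        simpa using hby
      | succ m =>
        show itinPlus B p y m = itinPlus B p (b * y) (m + 1)
        have hstep : (fPlus B p)^[m+1] (b * y) = (fPlus B p)^[m] y := by
          rw [Function.iterate_succ_apply]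
          congr 1
          unfold fPlus
          rw [if_pos hby]
          have : B * (b * y) = (B * b) * y := by ring
          rw [this, P.hBb, one_mul]
        unfold itinPlus
        rw [hstep]
    rw [hcons]
    exact lexLt_of_lexLt_of_lexLe (itin_plus_lt_minus P hbyI hpI hby) hL1

-- value identities
lemma partial_minus (P : Params b B p) (y : ℝ) (n : ℕ) :
    y = (1 - b) * (∑ k ∈ Finset.range n, (if itinMinus B p y k then (1:ℝ) else 0) * b ^ k)
        + b ^ n * (fMinus B p)^[n] y := by
  induction n with
  | zero => simp
  | succ n ih =>
    rw [Finset.sum_range_succ, itin_minus_rec B p y n]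
    have hbB : b * B = 1 := by rw [mul_comm]; exact P.hBb
    have e : (1 - b) * ((∑ k ∈ Finset.range n, (if itinMinus B p y k then (1:ℝ) else 0) * b ^ k)
          + (if itinMinus B p y n then (1:ℝ) else 0) * b ^ n)
        + b ^ (n+1) * (B * ((fMinus B p)^[n] y) - (B - 1) * (if itinMinus B p y n then (1:ℝ) else 0))
        = (1 - b) * (∑ k ∈ Finset.range n, (if itinMinus B p y k then (1:ℝ) else 0) * b ^ k)
          + b ^ n * ((b * B) * (fMinus B p)^[n] y)
          + ((1 - b) + b * (1 - B)) * ((if itinMinus B p y n then (1:ℝ) else 0) * b ^ n) := by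
      ring
    rw [e, hbB]
    have e2 : (1 - b) + b * (1 - B) = 1 - b * B := by ring
    rw [e2, hbB]
    simpa using ih

lemma partial_plus (P : Params b B p) (y : ℝ) (n : ℕ) :
    y = (1 - b) * (∑ k ∈ Finset.range n, (if itinPlus B p y k then (1:ℝ) else 0) * b ^ k)
        + b ^ n * (fPlus B p)^[n] y := by
  induction n with
  | zero => simp
  | succ n ih =>
    rw [Finset.sum_range_succ, itin_plus_rec B p y n]
    have hbB : b * B = 1 := by rw [mul_comm]; exact P.hBb
    have e : (1 - b) * ((∑ k ∈ Finset.range n, (if itinPlus B p y k then (1:ℝ) else 0) * b ^ k)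
          + (if itinPlus B p y n then (1:ℝ) else 0) * b ^ n)
        + b ^ (n+1) * (B * ((fPlus B p)^[n] y) - (B - 1) * (if itinPlus B p y n then (1:ℝ) else 0))
        = (1 - b) * (∑ k ∈ Finset.range n, (if itinPlus B p y k then (1:ℝ) else 0) * b ^ k)
          + b ^ n * ((b * B) * (fPlus B p)^[n] y)
          + ((1 - b) + b * (1 - B)) * ((if itinPlus B p y n then (1:ℝ) else 0) * b ^ n) := by
      ring
    rw [e, hbB]
    have e2 : (1 - b) + b * (1 - B) = 1 - b * B := by ring
    rw [e2, hbB]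
    simpa using ih

lemma hasSum_itin (P : Params b B p) (σ : Omega) (y : ℝ) (zb : ℕ → ℝ)
    (hzb : ∀ n, 0 ≤ zb n ∧ zb n ≤ 1)
    (hpart : ∀ n, y = (1 - b) * (∑ k ∈ Finset.range n, (if σ k then (1:ℝ) else 0) * b ^ k)
      + b ^ n * zb n) :
    HasSum (fun k : ℕ => (if σ k then (1:ℝ) else 0) * b ^ k) (y / (1 - b)) := by
  have hb0 := P.hb0
  have hb1 := P.hb1
  have h1b : (0:ℝ) < 1 - b := by linarith
  rw [(summable_proj σ hb0.le hb1).hasSum_iff_tendsto_nat]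
  have hdist : ∀ n, |(∑ k ∈ Finset.range n, (if σ k then (1:ℝ) else 0) * b ^ k) - y / (1-b)|
      ≤ b ^ n * (1 / (1 - b)) := by
    intro n
    have hp := hpart n
    set S := ∑ k ∈ Finset.range n, (if σ k then (1:ℝ) else 0) * b ^ k with hS
    have he : S - y / (1-b) = -(b ^ n * zb n) / (1 - b) := by
      field_simp
      linarith [hp]
    rw [he, abs_div, abs_of_pos h1b, abs_neg,
      abs_of_nonneg (mul_nonneg (by positivity) (hzb n).1)]
    rw [div_le_iff₀ h1b]
    have h2 : b ^ n * zb n ≤ b ^ n * 1 := mul_le_mul_of_nonneg_left (hzb n).2 (by positivity)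
    have h3 : b ^ n * (1 / (1 - b)) * (1 - b) = b ^ n := by field_simp
    rw [h3]
    linarith
  rw [tendsto_iff_dist_tendsto_zero]
  refine squeeze_zero (g := fun n : ℕ => b ^ n * (1 / (1 - b))) (fun n => dist_nonneg)
    (fun n => ?_) ?_
  · rw [Real.dist_eq]
    exact hdist n
  · have hten := tendsto_pow_atTop_nhds_zero_of_lt_one hb0.le hb1
    have h2 : Filter.Tendsto (fun n : ℕ => b ^ n * (1 / (1 - b))) Filter.atTop (nhds (0 * (1 / (1-b)))) :=
      hten.mul_const _
    simpa using h2

end Main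

lemma radix_eval {b B p : ℝ} (P : Params b B p) (σ : Omega) {y x : ℝ} (N : ℕ)
    (hsum : HasSum (fun k : ℕ => (if σ k then (1:ℝ) else 0) * b ^ k) (y / (1 - b)))
    (hyx : y = b ^ N * (1 - b) * x) :
    (∑' j : ℤ, (if (if -(N:ℤ) ≤ j then σ ((j + N).toNat) else false) then (1:ℝ) else 0)
      * B ^ (-j)) = x := by
  have hb0 := P.hb0
  have hb1 := P.hb1
  have hB0 := P.hB0
  set f : ℤ → ℝ := fun j =>
    (if (if -(N:ℤ) ≤ j then σ ((j + N).toNat) else false) then (1:ℝ) else 0) * B ^ (-j) with hf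
  set g : ℕ → ℝ := fun k => f ((k:ℤ) - N) with hg
  have h1 : ∑' j : ℤ, f j = ∑' k : ℕ, g k := by
    apply tsum_eq_tsum_of_ne_zero_bij (fun k : Function.support g => ((k : ℕ) : ℤ) - N)
    · intro u v huv
      simp only at huv
      have h : ((u : ℕ) : ℤ) = ((v : ℕ) : ℤ) := by omega
      exact Subtype.ext (by exact_mod_cast h)
    · intro j hj
      have hNj : -(N:ℤ) ≤ j := by
        by_contra hc
        apply hj
        simp only [hf, if_neg hc]
        simp
      have hk : (((j + N).toNat : ℕ) : ℤ) - N = j := by omega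
      have hgk : g ((j + N).toNat) ≠ 0 := by
        rw [hg]
        simp only
        rw [hk]
        exact hj
      exact ⟨⟨(j + N).toNat, hgk⟩, hk⟩
    · intro k
      rfl
  have h2 : ∀ k : ℕ, g k = (B:ℝ) ^ (N:ℕ) * ((if σ k then (1:ℝ) else 0) * b ^ k) := by
    intro k
    rw [hg]
    simp only [hf]
    have hc1 : -(N:ℤ) ≤ (k:ℤ) - N := by omega
    rw [if_pos hc1]
    have hc2 : (((k:ℤ) - N) + N).toNat = k := by omega
    rw [hc2]
    have hBz : B ^ (-((k:ℤ) - N)) = B ^ (N:ℕ) * b ^ k := by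
      have hBne : B ≠ 0 := ne_of_gt hB0
      have he : -((k:ℤ) - N) = (N:ℤ) - k := by ring
      rw [he, zpow_sub₀ hBne, zpow_natCast, zpow_natCast]
      have hbinv : B⁻¹ = b := inv_eq_of_mul_eq_one_right P.hBb
      rw [div_eq_mul_inv, ← inv_pow, hbinv]
    rw [hBz]
    ring
  rw [h1, tsum_congr h2, tsum_mul_left, hsum.tsum_eq, hyx]
  have h1b : (0:ℝ) < 1 - b := by linarith
  have h3 : b ^ N * (1 - b) * x / (1 - b) = b ^ N * x := by
    field_simp
  rw [h3, ← mul_assoc, ← mul_pow, P.hBb, one_pow, one_mul]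

end S10

/-- Correctness of the address algorithm. For an admissible non-null pair
`(α,β)`, `b` the least solution, `B = 1/b`, `p = π_b(α)`, `x ≥ 0`, and `N` the least
nonnegative integer with `y := b^N(1−b)x < p`, the decimal built from the itinerary
`τ̂_{(B,p,−)}(y)` (placing digit `σ_{N+j}` at position `j ≥ −N` and `0` elsewhere) lies
in `Ω^•_{(α,β,−)}` and has radix value `x`; analogously for `τ̂_{(B,p,+)}` and
`Ω^•_{(α,β,+)}`. -/
theorem stmt_10 (α β : Omega) (hadm : Admissible α β)
    (hnonnull : 0 < growth (OmegaUnion α β))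
    (b B p : ℝ) (hb : IsLeast (baseSet α β) b) (hB : B = 1 / b) (hp : p = proj b α)
    (x : ℝ) (hx : 0 ≤ x) (N : ℕ)
    (hN : IsLeast {n : ℕ | b ^ n * (1 - b) * x < p} N)
    (y : ℝ) (hy : y = b ^ N * (1 - b) * x) :
    ((fun j : ℤ => if -(N : ℤ) ≤ j then itinMinus B p y ((j + N).toNat) else false)
        ∈ dotMinus α β ∧
      radixVal B
        (fun j : ℤ => if -(N : ℤ) ≤ j then itinMinus B p y ((j + N).toNat) else false)
        = x) ∧
    ((fun j : ℤ => if -(N : ℤ) ≤ j then itinPlus B p y ((j + N).toNat) else false)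
        ∈ dotPlus α β ∧
      radixVal B
        (fun j : ℤ => if -(N : ℤ) ≤ j then itinPlus B p y ((j + N).toNat) else false)
        = x) := by
    classical
  have hbhalf : (1:ℝ)/2 ≤ b := hb.1.1.1
  have hb1 : b < 1 := hb.1.1.2
  have hb0 : (0:ℝ) < b := by linarith
  have hp2 : p ≤ b := by rw [hp]; exact S10.proj_head_false α hb0.le hb1 hadm.1
  have hp1 : 1 - b ≤ p := by
    rw [hp, S10.proj_b_eq hb]
    exact S10.proj_head_true β hb0.le hb1 hadm.2.2.1
  have P : S10.Params b B p := ⟨hbhalf, hb1, hB, hp1, hp2⟩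
  have hyp : y < p := by rw [hy]; exact hN.1
  have hy0 : 0 ≤ y := by
    rw [hy]
    have h1 : (0:ℝ) ≤ 1 - b := by linarith
    exact mul_nonneg (mul_nonneg (pow_nonneg hb0.le N) h1) hx
  have hy1 : y ≤ 1 := by linarith
  obtain ⟨hOm, hconsm⟩ := S10.itin_minus_mem hadm hb P hp hy0 hyp
  obtain ⟨hOp, hconsp⟩ := S10.itin_plus_mem hadm hb P hp hy0 hyp
  have hsum_m : HasSum (fun k : ℕ => (if itinMinus B p y k then (1:ℝ) else 0) * b ^ k)
      (y / (1 - b)) :=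
    S10.hasSum_itin P _ y (fun n => (fMinus B p)^[n] y)
      (P.orbit_minus_mem ⟨hy0, hy1⟩) (S10.partial_minus P y)
  have hsum_p : HasSum (fun k : ℕ => (if itinPlus B p y k then (1:ℝ) else 0) * b ^ k)
      (y / (1 - b)) :=
    S10.hasSum_itin P _ y (fun n => (fPlus B p)^[n] y)
      (P.orbit_plus_mem ⟨hy0, hy1⟩) (S10.partial_plus P y)
  refine ⟨⟨?_, ?_⟩, ?_, ?_⟩
  · refine ⟨-(N:ℤ), itinMinus B p y, ⟨hOm, hconsm⟩, ?_, ?_⟩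
    · intro j hj
      simp only
      rw [if_neg (by omega)]
    · intro i
      simp only
      rw [if_pos (by omega : -(N:ℤ) ≤ -(N:ℤ) + i)]
      congr 1
      omega
  · have := S10.radix_eval P (itinMinus B p y) N hsum_m hy
    simpa [radixVal] using this
  · refine ⟨-(N:ℤ), itinPlus B p y, ⟨hOp, hconsp⟩, ?_, ?_⟩
    · intro j hj
      simp only
      rw [if_neg (by omega)]
    · intro i
      simp only
      rw [if_pos (by omega : -(N:ℤ) ≤ -(N:ℤ) + i)]
      congr 1
      omega
  · have := S10.radix_eval P (itinPlus B p y) N hsum_p hy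
    simpa [radixVal] using this
end
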